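/- arXiv:2105.07746 — 4 statements merged into one kernel-verified Lean document; each statement's English description precedes it below -/
import Mathlib

section
/- Let κ be a measurable cardinal. Then κ ≤ r^cl_κ ≤ u^cl*_κ ≤ u^nm*_κ, u^cl*_κ ≤ u^cl_κ ≤ u^nm_κ, and u^nm*_κ ≤ u^nm_κ. -/
open Set Cardinal

/-- `c` is a club in the well-ordered type `α` (thought of as the cardinal `κ = #α`):
it is closed (contains the supremum of each of its nonempty bounded subsets) and unbounded. -/
def IsClubIn {α : Type*} [LinearOrder α] (c : Set α) : Prop :=
  (∀ s ⊆ c, s.Nonempty → ∀ a : α, IsLUB s a → a ∈ c) ∧ ∀ a : α, ∃ b ∈ c, a < b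

/-- `x` is stationary: it meets every club. -/
def IsStatIn {α : Type*} [LinearOrder α] (x : Set α) : Prop :=
  ∀ c : Set α, IsClubIn c → (x ∩ c).Nonempty

/-- `y` stationarily splits `x`: both `x ∩ y` and `x \ y` are stationary. -/
def StatSplits {α : Type*} [LinearOrder α] (y x : Set α) : Prop :=
  IsStatIn (x ∩ y) ∧ IsStatIn (x \ y)

/-- The stationary reaping number `r^cl_κ`. -/
noncomputable def statReapingNumber (α : Type*) [LinearOrder α] : Cardinal :=
  sInf { c : Cardinal | ∃ R : Set (Set α), (∀ y ∈ R, IsStatIn y) ∧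
    (∀ x : Set α, IsStatIn x → ∃ y ∈ R, ¬ StatSplits x y) ∧ c = #R }

/-- The club filter `Cl`: sets containing a club. -/
def ClubFilterSets (α : Type*) [LinearOrder α] : Set (Set α) :=
  {x : Set α | ∃ c : Set α, IsClubIn c ∧ c ⊆ x}

/-- `U` is a measure: a uniform, `<κ`-complete ultrafilter. -/
def IsMeasureOn {α : Type*} (U : Ultrafilter α) : Prop :=
  (∀ x ∈ U, #x = #α) ∧
    ∀ F : Set (Set α), #F < #α → (∀ x ∈ F, x ∈ U) → ⋂₀ F ∈ U

/-- `U` is a normal measure: a measure closed under diagonal intersections. -/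
def IsNormalMeasureOn {α : Type*} [LinearOrder α] (U : Ultrafilter α) : Prop :=
  IsMeasureOn U ∧ ∀ f : α → Set α, (∀ i, f i ∈ U) → {k : α | ∀ i < k, k ∈ f i} ∈ U

/-- `B` is a base for the ultrafilter `U`. -/
def IsBaseFor {α : Type*} (B : Set (Set α)) (U : Ultrafilter α) : Prop :=
  (∀ b ∈ B, b ∈ U) ∧ ∀ u ∈ U, ∃ b ∈ B, b ⊆ u

/-- `{b ∩ c : b ∈ B, c ∈ Cl}`, the candidate base generated by `B` together with
the club filter. -/
def InterClubBase {α : Type*} [LinearOrder α] (B : Set (Set α)) : Set (Set α) :=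
  {y : Set α | ∃ b ∈ B, ∃ c ∈ ClubFilterSets α, y = b ∩ c}

/-- The stationary ultrafilter number `u^cl_κ`. -/
noncomputable def uCl (α : Type*) [LinearOrder α] : Cardinal :=
  sInf { c : Cardinal | ∃ B : Set (Set α), (∀ b ∈ B, IsStatIn b) ∧
    (∃ U : Ultrafilter α, IsBaseFor B U) ∧ c = #B }

/-- The stationary* ultrafilter number `u^cl*_κ`. -/
noncomputable def uClStar (α : Type*) [LinearOrder α] : Cardinal :=
  sInf { c : Cardinal | ∃ B : Set (Set α), (∀ b ∈ B, IsStatIn b) ∧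
    (∃ U : Ultrafilter α, IsBaseFor (InterClubBase B) U) ∧ c = #B }

/-- The normal measure ultrafilter number `u^nm_κ`. -/
noncomputable def uNm (α : Type*) [LinearOrder α] : Cardinal :=
  sInf { c : Cardinal | ∃ B : Set (Set α), (∀ b ∈ B, IsStatIn b) ∧
    (∃ U : Ultrafilter α, IsNormalMeasureOn U ∧ IsBaseFor B U) ∧ c = #B }

/-- The normal measure* ultrafilter number `u^nm*_κ`. -/
noncomputable def uNmStar (α : Type*) [LinearOrder α] : Cardinal :=
  sInf { c : Cardinal | ∃ B : Set (Set α), (∀ b ∈ B, IsStatIn b) ∧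
    (∃ U : Ultrafilter α, IsNormalMeasureOn U ∧ IsBaseFor (InterClubBase B) U) ∧ c = #B }

section Basics
variable {α : Type*} [LinearOrder α] [WellFoundedLT α]

lemma my_exists_isLUB {s : Set α} (hne : s.Nonempty) (hbd : (upperBounds s).Nonempty) :
    ∃ b, IsLUB s b := by
  refine ⟨wellFounded_lt.min (upperBounds s) hbd, wellFounded_lt.min_mem _ hbd, ?_⟩
  intro u hu
  exact not_lt.1 (wellFounded_lt.not_lt_min _ hu)

variable (hreg : (#α).IsRegular) (hunc : ℵ₀ < #α) (hinit : ∀ a : α, #(Set.Iio a) < #α)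

include hunc hinit in
lemma card_Iic_lt (a : α) : #(Set.Iic a) < #α := by
  have : (Set.Iic a) = insert a (Set.Iio a) := by
    ext x; simp [le_iff_lt_or_eq, or_comm]
  rw [this]
  calc #(insert a (Set.Iio a) : Set α) ≤ #(Set.Iio a) + 1 := Cardinal.mk_insert_le
    _ < #α := Cardinal.add_lt_of_lt hunc.le (hinit a) (lt_trans Cardinal.one_lt_aleph0 hunc)

include hreg hunc hinit in
lemma bounded_of_card_lt {s : Set α} (hs : #s < #α) : ∃ b : α, ∀ x ∈ s, x < b := by
  by_contra h
  push_neg at h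
  have hcov : (Set.univ : Set α) = ⋃ x : s, Set.Iic (x : α) := by
    apply Set.eq_of_subset_of_subset
    · intro b _
      obtain ⟨x, hx, hbx⟩ := h b
      exact Set.mem_iUnion.2 ⟨⟨x, hx⟩, hbx⟩
    · exact fun _ _ => Set.mem_univ _
  have : #α ≤ #s * ⨆ x : s, #(Set.Iic (x : α)) := by
    calc #α = #(Set.univ : Set α) := Cardinal.mk_univ.symm
      _ = #(⋃ x : s, Set.Iic (x : α)) := by rw [hcov]
      _ ≤ #s * ⨆ x : s, #(Set.Iic (x : α)) := Cardinal.mk_iUnion_le _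
  have hlt : #s * (⨆ x : s, #(Set.Iic (x : α))) < #α := by
    apply Cardinal.mul_lt_of_lt hunc.le hs
    exact Cardinal.iSup_lt_of_isRegular hreg hs (fun x => card_Iic_lt hunc hinit _)
  exact absurd this (not_le.2 hlt)

include hreg hunc hinit in
lemma exists_isLUB_of_card {s : Set α} (hne : s.Nonempty) (hs : #s < #α) :
    ∃ b, IsLUB s b := by
  obtain ⟨b, hb⟩ := bounded_of_card_lt hreg hunc hinit hs
  exact my_exists_isLUB hne ⟨b, fun x hx => (hb x hx).le⟩

include hunc hinit in
lemma my_noMax (a : α) : ∃ b, a < b := by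
  by_contra h
  push_neg at h
  have huniv : (Set.univ : Set α) = Set.Iic a := by
    ext x; simpa using h x
  have h2 := card_Iic_lt hunc hinit a
  rw [← huniv, Cardinal.mk_univ] at h2
  exact lt_irrefl _ h2

include hreg hunc hinit in
lemma chain_lemma (F : α → α) (hF : ∀ x, x < F x) (a : α) :
    ∃ (g : ℕ → α) (k : α), (∀ n, g (n + 1) = F (g n)) ∧ StrictMono g ∧ a < k ∧
      (∀ n, g n < k) ∧ IsLUB (Set.range g) k ∧ (∀ β < k, ∃ n, β < g n) := by
  classical
  refine ⟨fun n => F^[n] (F a), ?_⟩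
  set g : ℕ → α := fun n => F^[n] (F a) with hg
  have hsucc : ∀ n, g (n + 1) = F (g n) := by
    intro n; simp only [hg, Function.iterate_succ_apply']
  have hmono : StrictMono g := strictMono_nat_of_lt_succ (fun n => (hsucc n) ▸ hF (g n))
  have hcard : #(Set.range g) < #α := by
    have : Countable (Set.range g) := Set.countable_range g
    exact lt_of_le_of_lt Cardinal.mk_le_aleph0 hunc
  obtain ⟨k, hk⟩ : ∃ k, IsLUB (Set.range g) k := by
    obtain ⟨b, hb⟩ := bounded_of_card_lt hreg hunc hinit hcard
    exact my_exists_isLUB ⟨g 0, Set.mem_range_self 0⟩ ⟨b, fun x hx => (hb x hx).le⟩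
  have hlt : ∀ n, g n < k := fun n =>
    lt_of_lt_of_le (hmono (Nat.lt_succ_self n)) (hk.1 (Set.mem_range_self _))
  refine ⟨k, hsucc, hmono, ?_, hlt, hk, ?_⟩
  · have : g 0 = F a := rfl
    exact lt_of_lt_of_le (this ▸ hF a) (hk.1 (Set.mem_range_self 0))
  · intro β hβ
    by_contra h
    push_neg at h
    exact absurd (hk.2 (fun x ⟨n, hn⟩ => hn ▸ h n)) (not_le.2 hβ)


end Basics

section Clubs
variable {α : Type*} [LinearOrder α] [WellFoundedLT α]
variable (hreg : (#α).IsRegular) (hunc : ℵ₀ < #α) (hinit : ∀ a : α, #(Set.Iio a) < #α)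

include hunc hinit in
lemma club_univ : IsClubIn (Set.univ : Set α) :=
  ⟨fun _ _ _ _ _ => Set.mem_univ _, fun a => by
    obtain ⟨b, hb⟩ := my_noMax hunc hinit a; exact ⟨b, Set.mem_univ _, hb⟩⟩

include hunc hinit in
lemma club_Ioi (a : α) : IsClubIn (Set.Ioi a) := by
  constructor
  · rintro s hs ⟨x, hx⟩ b hb
    exact lt_of_lt_of_le (hs hx) (hb.1 hx)
  · intro x
    obtain ⟨b, hb⟩ := my_noMax hunc hinit (max a x)
    exact ⟨b, lt_of_le_of_lt (le_max_left a x) hb, lt_of_le_of_lt (le_max_right a x) hb⟩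

include hreg hunc hinit in
lemma club_sInter {C : Set (Set α)} (hC : #C < #α) (hc : ∀ c ∈ C, IsClubIn c) :
    IsClubIn (⋂₀ C) := by
  classical
  constructor
  · intro s hs hne b hb c hcC
    exact (hc c hcC).1 s (fun x hx => hs hx c hcC) hne b hb
  · intro a
    -- pick function for each club
    have hpick : ∀ (c : C) (x : α), ∃ y, y ∈ (c : Set α) ∧ x < y := fun c x => (hc c c.2).2 x
    choose e he1 he2 using hpick
    have hFex : ∀ x : α, ∃ b, x < b ∧ ∀ c : C, e c x < b := by
      intro x
      have hcard : #(Set.range fun c : C => e c x) < #α :=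
        lt_of_le_of_lt Cardinal.mk_range_le hC
      obtain ⟨b0, hb0⟩ := bounded_of_card_lt hreg hunc hinit hcard
      obtain ⟨x', hx'⟩ := my_noMax hunc hinit x
      refine ⟨max b0 x', lt_of_lt_of_le hx' (le_max_right _ _), fun c => ?_⟩
      exact lt_of_lt_of_le (hb0 _ (Set.mem_range_self c)) (le_max_left _ _)
    choose F hF1 hF2 using hFex
    obtain ⟨g, k, hsucc, hmono, hak, hlt, hk, hcof⟩ :=
      chain_lemma hreg hunc hinit F hF1 a
    refine ⟨k, ?_, hak⟩
    intro c hcC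
    set cc : C := ⟨c, hcC⟩
    have hsub : Set.range (fun n => e cc (g n)) ⊆ c := fun x ⟨n, hn⟩ => hn ▸ he1 cc (g n)
    have hlub : IsLUB (Set.range fun n => e cc (g n)) k := by
      constructor
      · rintro x ⟨n, rfl⟩
        exact le_of_lt (lt_of_lt_of_le (lt_of_lt_of_le (hF2 (g n) cc) (hsucc n ▸ le_refl _))
          (hlt (n + 1)).le)
      · intro u hu
        apply hk.2
        rintro x ⟨n, rfl⟩
        exact le_of_lt (lt_of_lt_of_le (he2 cc (g n)) (hu (Set.mem_range_self n)))
    exact (hc c hcC).1 _ hsub ⟨_, Set.mem_range_self 0⟩ k hlub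

include hreg hunc hinit in
lemma club_iInter {ι : Sort*} {f : ι → Set α} (hι : #(Set.range f) < #α)
    (hf : ∀ i, IsClubIn (f i)) : IsClubIn (⋂ i, f i) := by
  rw [← Set.sInter_range]
  exact club_sInter hreg hunc hinit hι (by rintro c ⟨i, rfl⟩; exact hf i)

include hreg hunc hinit in
lemma club_inter {c d : Set α} (hcl : IsClubIn c) (hd : IsClubIn d) : IsClubIn (c ∩ d) := by
  have : c ∩ d = ⋂₀ {c, d} := by simp
  rw [this]
  refine club_sInter hreg hunc hinit ?_ ?_
  · exact lt_of_lt_of_le ((Set.toFinite _).lt_aleph0) hunc.le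
  · rintro x (rfl | rfl); exact hcl; simp_all
end Clubs
/-- The set of accumulation points of `c`. -/
def AccPts {α : Type*} [LinearOrder α] (c : Set α) : Set α :=
  {k | (Set.Iio k).Nonempty ∧ ∀ β < k, ∃ j ∈ c, β < j ∧ j < k}

/-- Diagonal intersection. -/
def DiagInter {α : Type*} [LinearOrder α] (c : α → Set α) : Set α :=
  {k | ∀ ν < k, k ∈ c ν}

section Clubs2
variable {α : Type*} [LinearOrder α] [WellFoundedLT α]
variable (hreg : (#α).IsRegular) (hunc : ℵ₀ < #α) (hinit : ∀ a : α, #(Set.Iio a) < #α)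

lemma accPts_closed {c : Set α} {s : Set α} (hs : s ⊆ AccPts c) (hne : s.Nonempty)
    {b : α} (hb : IsLUB s b) : b ∈ AccPts c := by
  by_cases hbs : b ∈ s
  · exact hs hbs
  have hlt : ∀ x ∈ s, x < b := fun x hx => lt_of_le_of_ne (hb.1 hx) (fun h => hbs (h ▸ hx))
  obtain ⟨x0, hx0⟩ := hne
  refine ⟨⟨x0, hlt _ hx0⟩, ?_⟩
  intro β hβ
  obtain ⟨x, hxs, hβx⟩ : ∃ x ∈ s, β < x := by
    by_contra h; push_neg at h
    exact absurd (hb.2 h) (not_le.2 hβ)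
  obtain ⟨j, hj, h1, h2⟩ := (hs hxs).2 β hβx
  exact ⟨j, hj, h1, lt_trans h2 (hlt _ hxs)⟩

include hreg hunc hinit in
lemma club_accPts {c : Set α} (hc : IsClubIn c) : IsClubIn (AccPts c) := by
  constructor
  · exact fun s hs hne b hb => accPts_closed hs hne hb
  · intro a
    choose e he1 he2 using hc.2
    obtain ⟨g, k, hsucc, hmono, hak, hlt, hk, hcof⟩ := chain_lemma hreg hunc hinit e he2 a
    refine ⟨k, ⟨⟨g 0, hlt 0⟩, ?_⟩, hak⟩
    intro β hβ
    obtain ⟨n, hn⟩ := hcof β hβ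
    exact ⟨g (n + 1), hsucc n ▸ he1 (g n), lt_trans hn (hmono (Nat.lt_succ_self n)), hlt (n + 1)⟩

lemma accPts_subset {c : Set α} (hc : IsClubIn c) : AccPts c ⊆ c := by
  rintro k ⟨hne, hacc⟩
  set s := c ∩ Set.Iio k with hs
  obtain ⟨b0, hb0⟩ := hne
  obtain ⟨j0, hj0, _, hj0k⟩ := hacc b0 hb0
  refine hc.1 s (Set.inter_subset_left) ⟨j0, hj0, hj0k⟩ k ⟨fun x hx => (hx.2).le, ?_⟩
  intro u hu
  by_contra h
  obtain ⟨j, hj, huj, hjk⟩ := hacc u (not_le.1 h)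
  exact absurd (hu ⟨hj, hjk⟩) (not_le.2 huj)

include hreg hunc hinit in
lemma club_diagInter {c : α → Set α} (hc : ∀ ν, IsClubIn (c ν)) :
    IsClubIn (DiagInter c) := by
  classical
  constructor
  · intro s hs hne b hb
    by_cases hbs : b ∈ s
    · exact hs hbs
    have hltb : ∀ x ∈ s, x < b := fun x hx => lt_of_le_of_ne (hb.1 hx) (fun h => hbs (h ▸ hx))
    intro ν hν
    set t := s ∩ Set.Ioi ν with ht
    have htne : t.Nonempty := by
      by_contra h
      rw [Set.not_nonempty_iff_eq_empty] at h
      have hall : ∀ x ∈ s, x ≤ ν := by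
        intro x hx
        by_contra hx2
        have hmem2 : x ∈ s ∩ Set.Ioi ν := ⟨hx, not_le.1 hx2⟩
        rw [ht] at h
        rw [h] at hmem2
        exact absurd hmem2 (Set.notMem_empty x)
      exact absurd (hb.2 hall) (not_le.2 hν)
    have htsub : t ⊆ c ν := fun x hx => hs hx.1 ν hx.2
    refine (hc ν).1 t htsub htne b ⟨fun x hx => hb.1 hx.1, ?_⟩
    intro u hu
    apply hb.2
    intro x hx
    by_cases hxν : ν < x
    · exact hu ⟨hx, hxν⟩
    · obtain ⟨y, hy⟩ := htne
      exact le_trans (le_trans (not_lt.1 hxν) hy.2.le) (hu hy)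
  · intro a
    have hpick : ∀ (ν : α) (x : α), ∃ y, y ∈ c ν ∧ x < y := fun ν x => (hc ν).2 x
    choose e he1 he2 using hpick
    have hFex : ∀ x : α, ∃ b, x < b ∧ ∀ ν ≤ x, e ν x < b := by
      intro x
      have hcard : #(Set.range fun ν : Set.Iic x => e (↑ν) x) < #α :=
        lt_of_le_of_lt Cardinal.mk_range_le (card_Iic_lt hunc hinit x)
      obtain ⟨b0, hb0⟩ := bounded_of_card_lt hreg hunc hinit hcard
      obtain ⟨x', hx'⟩ := my_noMax hunc hinit x
      refine ⟨max b0 x', lt_of_lt_of_le hx' (le_max_right _ _), fun ν hν => ?_⟩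
      exact lt_of_lt_of_le (hb0 _ (Set.mem_range_self (⟨ν, hν⟩ : Set.Iic x))) (le_max_left _ _)
    choose F hF1 hF2 using hFex
    obtain ⟨g, k, hsucc, hmono, hak, hlt, hk, hcof⟩ := chain_lemma hreg hunc hinit F hF1 a
    refine ⟨k, ?_, hak⟩
    intro ν hν
    obtain ⟨n, hn⟩ := hcof ν hν
    have hmem : ∀ m, n ≤ m → e ν (g m) ∈ c ν ∩ Set.Ioo (g m) (g (m + 1)) := by
      intro m hm
      have hνm : ν ≤ g m := le_of_lt (lt_of_lt_of_le hn (hmono.monotone hm))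
      exact ⟨he1 ν (g m), he2 ν (g m), hsucc m ▸ hF2 (g m) ν hνm⟩
    set t := Set.range (fun m : ℕ => e ν (g (n + m))) with htdef
    have hlub : IsLUB t k := by
      constructor
      · rintro x ⟨m, rfl⟩
        exact le_of_lt (lt_trans (hmem (n + m) (Nat.le_add_right n m)).2.2 (hlt (n + m + 1)))
      · intro u hu
        apply hk.2
        rintro x ⟨j, rfl⟩
        calc g j ≤ g (n + j) := hmono.monotone (Nat.le_add_left j n)
          _ ≤ e ν (g (n + j)) := (hmem (n + j) (Nat.le_add_right n j)).2.1.le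
          _ ≤ u := hu (Set.mem_range_self j)
    exact (hc ν).1 t (by rintro x ⟨m, rfl⟩; exact (hmem (n + m) (Nat.le_add_right n m)).1)
      ⟨_, Set.mem_range_self 0⟩ k hlub
end Clubs2
section Stat
variable {α : Type*} [LinearOrder α] [WellFoundedLT α]
variable (hreg : (#α).IsRegular) (hunc : ℵ₀ < #α) (hinit : ∀ a : α, #(Set.Iio a) < #α)

lemma stat_mono {x y : Set α} (hxy : x ⊆ y) (hx : IsStatIn x) : IsStatIn y :=
  fun c hc => by obtain ⟨k, h1, h2⟩ := hx c hc; exact ⟨k, hxy h1, h2⟩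

lemma not_stat_iff {x : Set α} : ¬ IsStatIn x ↔ ∃ c, IsClubIn c ∧ x ∩ c = ∅ := by
  unfold IsStatIn
  push_neg
  simp [Set.not_nonempty_iff_eq_empty]

include hreg hunc hinit in
lemma stat_inter_club {S c : Set α} (hS : IsStatIn S) (hc : IsClubIn c) :
    IsStatIn (S ∩ c) := by
  intro d hd
  obtain ⟨k, h1, h2, h3⟩ := hS (c ∩ d) (club_inter hreg hunc hinit hc hd)
  exact ⟨k, ⟨h1, h2⟩, h3⟩

include hreg hunc hinit in
lemma stat_split2 {S x : Set α} (hS : IsStatIn S) (h : ¬ IsStatIn (S ∩ x)) :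
    IsStatIn (S \ x) := by
  obtain ⟨c1, hc1, hc1e⟩ := not_stat_iff.1 h
  intro c hc
  obtain ⟨k, hk1, hk2, hk3⟩ := hS (c1 ∩ c) (club_inter hreg hunc hinit hc1 hc)
  by_cases hkx : k ∈ x
  · exfalso
    have hmem : k ∈ S ∩ x ∩ c1 := ⟨⟨hk1, hkx⟩, hk2⟩
    rw [hc1e] at hmem
    exact hmem
  · exact ⟨k, ⟨hk1, hkx⟩, hk3⟩

include hreg hunc hinit in
lemma stat_of_sUnion {A : Set (Set α)} (hA : #A < #α) (hstat : IsStatIn (⋃₀ A)) :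
    ∃ y ∈ A, IsStatIn y := by
  classical
  by_contra h
  push_neg at h
  have hch : ∀ y : A, ∃ c, IsClubIn c ∧ (y : Set α) ∩ c = ∅ :=
    fun y => not_stat_iff.1 (h y y.2)
  choose c hc1 hc2 using hch
  have hD : IsClubIn (⋂ y : A, c y) := by
    refine club_iInter hreg hunc hinit ?_ hc1
    exact lt_of_le_of_lt Cardinal.mk_range_le hA
  obtain ⟨k, ⟨y, hyA, hky⟩, hkD⟩ := hstat _ hD
  have : k ∈ (y : Set α) ∩ c ⟨y, hyA⟩ := ⟨hky, Set.mem_iInter.1 hkD ⟨y, hyA⟩⟩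
  rw [hc2 ⟨y, hyA⟩] at this
  exact this

include hreg hunc hinit in
lemma fodor {S : Set α} (hS : IsStatIn S) (f : α → α) (hf : ∀ k ∈ S, f k < k) :
    ∃ γ, IsStatIn {k | k ∈ S ∧ f k = γ} := by
  classical
  by_contra h
  push_neg at h
  have hch : ∀ γ, ∃ c, IsClubIn c ∧ {k | k ∈ S ∧ f k = γ} ∩ c = ∅ :=
    fun γ => not_stat_iff.1 (h γ)
  choose c hc1 hc2 using hch
  obtain ⟨k, hkS, hkD⟩ := hS (DiagInter c) (club_diagInter hreg hunc hinit hc1)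
  have : k ∈ {j | j ∈ S ∧ f j = f k} ∩ c (f k) := ⟨⟨hkS, rfl⟩, hkD (f k) (hf k hkS)⟩
  rw [hc2 (f k)] at this
  exact this
end Stat
/-- A club in the initial segment below `k`. -/
def LClub {α : Type*} [LinearOrder α] (k : α) (w : Set α) : Prop :=
  w ⊆ Set.Iio k ∧ (∀ s ⊆ w, s.Nonempty → ∀ b, IsLUB s b → b < k → b ∈ w) ∧
    ∀ β < k, ∃ j ∈ w, β < j

/-- `k` has countable cofinality. -/
def CtblCof {α : Type*} [LinearOrder α] (k : α) : Prop :=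
  ∃ g : ℕ → α, (∀ n, g n < k) ∧ ∀ β < k, ∃ n, β < g n

section Split
variable {α : Type*} [LinearOrder α] [WellFoundedLT α]
variable (hreg : (#α).IsRegular) (hunc : ℵ₀ < #α) (hinit : ∀ a : α, #(Set.Iio a) < #α)

include hreg hunc hinit in
theorem split_stat {S : Set α} (hS : IsStatIn S) :
    ∃ u v, u ⊆ S ∧ v ⊆ S ∧ u ∩ v = ∅ ∧ IsStatIn u ∧ IsStatIn v := by
  classical
  set L := AccPts (Set.univ : Set α) with hL
  have hLclub : IsClubIn L := club_accPts hreg hunc hinit (club_univ hunc hinit)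
  set S₁ := (S ∩ L) ∩ {k | CtblCof k} with hS₁
  by_cases hI : IsStatIn S₁
  · -- Case I : countable cofinality points are stationary
    have hlad : ∀ k : α, ∃ g : ℕ → α, CtblCof k → ((∀ n, g n < k) ∧ ∀ β < k, ∃ n, β < g n) := by
      intro k
      by_cases h : CtblCof k
      · obtain ⟨g, hg⟩ := h; exact ⟨g, fun _ => hg⟩
      · exact ⟨fun _ => k, fun hc => absurd hc h⟩
    choose lad hlad using hlad
    have hreglad : ∀ k ∈ S₁, ∀ n, lad k n < k := fun k hk n => (hlad k hk.2).1 n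
    have hclaim : ∃ n : ℕ, ∀ γ : α, IsStatIn {k | k ∈ S₁ ∧ γ < lad k n} := by
      by_contra hcl
      push_neg at hcl
      have hcl' : ∀ n : ℕ, ∃ γ c, IsClubIn c ∧ {k | k ∈ S₁ ∧ γ < lad k n} ∩ c = ∅ := by
        intro n
        obtain ⟨γ, hγ⟩ := hcl n
        obtain ⟨c, hc1, hc2⟩ := not_stat_iff.1 hγ
        exact ⟨γ, c, hc1, hc2⟩
      choose γ c hc1 hc2 using hcl'
      have hγbd : ∃ b : α, ∀ n : ℕ, γ n < b := by
        have : Countable (Set.range γ) := Set.countable_range γ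
        obtain ⟨b, hb⟩ := bounded_of_card_lt hreg hunc hinit
          (lt_of_le_of_lt (Cardinal.mk_le_aleph0 (α := Set.range γ)) hunc)
        exact ⟨b, fun n => hb _ (Set.mem_range_self n)⟩
      obtain ⟨γs, hγs⟩ := hγbd
      have hD : IsClubIn ((⋂ n : ℕ, c n) ∩ Set.Ioi γs) := by
        refine club_inter hreg hunc hinit ?_ (club_Ioi hunc hinit γs)
        refine club_iInter hreg hunc hinit ?_ hc1
        have : Countable (Set.range c) := Set.countable_range c
        exact lt_of_le_of_lt (Cardinal.mk_le_aleph0 (α := Set.range c)) hunc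
      obtain ⟨k, hk1, hk2, hk3⟩ := hI _ hD
      have hbd : ∀ n : ℕ, lad k n ≤ γ n := by
        intro n
        by_contra hgt
        have : k ∈ {j | j ∈ S₁ ∧ γ n < lad j n} ∩ c n :=
          ⟨⟨hk1, not_le.1 hgt⟩, Set.mem_iInter.1 hk2 n⟩
        rw [hc2 n] at this
        exact this
      obtain ⟨n, hn⟩ := (hlad k hk1.2).2 γs hk3
      exact absurd (le_trans (hbd n) (hγs n).le) (not_le.2 hn)
    obtain ⟨n, hn⟩ := hclaim
    obtain ⟨γ₀, hγ₀⟩ := fodor hreg hunc hinit hI (fun k => lad k n)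
      (fun k hk => hreglad k hk n)
    refine ⟨{k | k ∈ S₁ ∧ γ₀ < lad k n}, {k | k ∈ S₁ ∧ lad k n = γ₀},
      fun k hk => hk.1.1.1, fun k hk => hk.1.1.1, ?_, hn γ₀, hγ₀⟩
    ext k
    simp only [Set.mem_inter_iff, Set.mem_setOf_eq, Set.mem_empty_iff_false, iff_false]
    rintro ⟨⟨_, h1⟩, ⟨_, h2⟩⟩
    rw [h2] at h1
    exact lt_irrefl _ h1
  · -- Case II : uncountable cofinality
    have hS' : IsStatIn ((S ∩ L) \ {k | CtblCof k}) := by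
      refine stat_split2 hreg hunc hinit ?_ hI
      exact stat_inter_club hreg hunc hinit hS hLclub
    set S' := (S ∩ L) \ {k | CtblCof k} with hS'def
    -- T : the set of points of S' where S' does not reflect
    set T := {k | k ∈ S' ∧ ∃ w, LClub k w ∧ w ∩ S' = ∅} with hT
    have hTstat : IsStatIn T := by
      intro c hc
      set M := AccPts c with hM
      have hMclub : IsClubIn M := club_accPts hreg hunc hinit hc
      have hne : (S' ∩ M).Nonempty := hS' M hMclub
      set k₀ := wellFounded_lt.min (S' ∩ M) hne with hk₀
      have hk₀mem : k₀ ∈ S' ∩ M := wellFounded_lt.min_mem _ hne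
      have hk₀min : ∀ j ∈ S' ∩ M, ¬ j < k₀ := fun j hj => wellFounded_lt.not_lt_min _ hj
      set w := M ∩ Set.Iio k₀ with hw
      have hwcof : ∀ β < k₀, ∃ j ∈ w, β < j := by
        intro β hβ
        -- build an ω-chain inside c ∩ (β, k₀)
        have hstep : ∀ x : α, ∃ y, x < k₀ → (y ∈ c ∧ x < y ∧ y < k₀) := by
          intro x
          by_cases h : x < k₀
          · obtain ⟨j, hj, h1, h2⟩ := hk₀mem.2.2 x h
            exact ⟨j, fun _ => ⟨hj, h1, h2⟩⟩
          · exact ⟨x, fun hx => absurd hx h⟩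
        choose F hF using hstep
        set g : ℕ → α := fun m => F^[m] (F β) with hg
        have hglt : ∀ m, g m < k₀ ∧ g m ∈ c := by
          intro m
          induction m with
          | zero => exact ⟨(hF β hβ).2.2, (hF β hβ).1⟩
          | succ p ih =>
            have : g (p + 1) = F (g p) := by simp only [hg, Function.iterate_succ_apply']
            rw [this]
            exact ⟨(hF (g p) ih.1).2.2, (hF (g p) ih.1).1⟩
        have hgmono : ∀ m, g m < g (m + 1) := by
          intro m
          have : g (m + 1) = F (g m) := by simp only [hg, Function.iterate_succ_apply']
          rw [this]
          exact (hF (g m) (hglt m).1).2.1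
        have hgβ : β < g 0 := (hF β hβ).2.1
        -- g is not cofinal in k₀ since k₀ has uncountable cofinality
        have hnotcof : ∃ β' < k₀, ∀ m, g m ≤ β' := by
          by_contra hcc
          push_neg at hcc
          exact hk₀mem.1.2 ⟨g, fun m => (hglt m).1, fun β' hβ' =>
            by obtain ⟨m, hm⟩ := hcc β' hβ'; exact ⟨m, hm⟩⟩
        obtain ⟨β', hβ'k, hβ'⟩ := hnotcof
        obtain ⟨b, hb⟩ := my_exists_isLUB (s := Set.range g) ⟨g 0, Set.mem_range_self 0⟩
          ⟨β', by rintro x ⟨m, rfl⟩; exact hβ' m⟩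
        have hbk : b < k₀ := lt_of_le_of_lt (hb.2 (by rintro x ⟨m, rfl⟩; exact hβ' m)) hβ'k
        have hbM : b ∈ M := by
          refine ⟨⟨g 0, lt_of_lt_of_le (hgmono 0) (hb.1 (Set.mem_range_self 1))⟩, ?_⟩
          intro δ hδ
          obtain ⟨m, hm⟩ : ∃ m, δ < g m := by
            by_contra hcc
            push_neg at hcc
            exact absurd (hb.2 (by rintro x ⟨m, rfl⟩; exact hcc m)) (not_le.2 hδ)
          refine ⟨g (m + 1), (hglt (m + 1)).2, lt_trans hm (hgmono m), ?_⟩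
          exact lt_of_lt_of_le (hgmono (m + 1)) (hb.1 (Set.mem_range_self (m + 2)))
        exact ⟨b, ⟨hbM, hbk⟩, lt_of_lt_of_le hgβ (hb.1 (Set.mem_range_self 0))⟩
      refine ⟨k₀, ⟨hk₀mem.1, w, ⟨Set.inter_subset_right, ?_, hwcof⟩, ?_⟩, ?_⟩
      · -- closedness of w
        intro s hs hne' b hb hbk
        exact ⟨accPts_closed (fun x hx => (hs hx).1) hne' hb, hbk⟩
      · -- w ∩ S' = ∅
        ext j
        simp only [Set.mem_inter_iff, Set.mem_empty_iff_false, iff_false]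
        rintro ⟨⟨hjM, hjk⟩, hjS'⟩
        exact hk₀min j ⟨hjS', hjM⟩ hjk
      · exact accPts_subset hc hk₀mem.2
    -- pick the witnessing local clubs
    have hdex : ∀ k : α, ∃ w, k ∈ T → LClub k w ∧ w ∩ S' = ∅ := by
      intro k
      by_cases h : k ∈ T
      · obtain ⟨_, w, h1, h2⟩ := h; exact ⟨w, fun _ => ⟨h1, h2⟩⟩
      · exact ⟨∅, fun hk => absurd hk h⟩
    choose d hd using hdex
    -- canonical ladders through the local clubs
    have haex : ∀ (ν k : α), ∃ j, (k ∈ T ∧ ν < k) → (j ∈ d k ∧ ν < j ∧ j < k) := by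
      intro ν k
      by_cases h : k ∈ T ∧ ν < k
      · have hne : (d k ∩ Set.Ioi ν).Nonempty := by
          obtain ⟨j, hj1, hj2⟩ := ((hd k h.1).1).2.2 ν h.2
          exact ⟨j, hj1, hj2⟩
        refine ⟨wellFounded_lt.min _ hne, fun _ => ?_⟩
        have hmem := wellFounded_lt.min_mem _ hne
        exact ⟨hmem.1, hmem.2, (hd k h.1).1.1 hmem.1⟩
      · exact ⟨k, fun hk => absurd hk h⟩
    choose a ha using haex
    have hclaim : ∃ ν : α, ∀ γ : α, IsStatIn {k | k ∈ T ∧ ν < k ∧ γ < a ν k} := by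
      by_contra hcl
      push_neg at hcl
      have hcl' : ∀ ν : α, ∃ γ c, IsClubIn c ∧ {k | k ∈ T ∧ ν < k ∧ γ < a ν k} ∩ c = ∅ := by
        intro ν
        obtain ⟨γ, hγ⟩ := hcl ν
        obtain ⟨c, h1, h2⟩ := not_stat_iff.1 hγ
        exact ⟨γ, c, h1, h2⟩
      choose γ c hc1 hc2 using hcl'
      have hΔ : IsClubIn (DiagInter c ∩ DiagInter (fun ν => Set.Ioi (γ ν))) := by
        refine club_inter hreg hunc hinit (club_diagInter hreg hunc hinit hc1)
          (club_diagInter hreg hunc hinit (fun ν => club_Ioi hunc hinit (γ ν)))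
      obtain ⟨k₁, hk₁T, hk₁⟩ := hTstat _ hΔ
      obtain ⟨k₂, hk₂T, hk₂⟩ := hTstat _
        (club_inter hreg hunc hinit hΔ (club_Ioi hunc hinit k₁))
      have hk₁₂ : k₁ < k₂ := hk₂.2
      -- every a β k₂ for β < k₁ lies in d k₂ ∩ (β, k₁)
      have hsmall : ∀ β < k₁, a β k₂ ∈ d k₂ ∧ β < a β k₂ ∧ a β k₂ < k₁ := by
        intro β hβ
        have hβk₂ : β < k₂ := lt_trans hβ hk₁₂
        have haprop := ha β k₂ ⟨hk₂T, hβk₂⟩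
        have hle : a β k₂ ≤ γ β := by
          by_contra hgt
          have : k₂ ∈ {k | k ∈ T ∧ β < k ∧ γ β < a β k} ∩ c β :=
            ⟨⟨hk₂T, hβk₂, not_le.1 hgt⟩, hk₂.1.1 β hβk₂⟩
          rw [hc2 β] at this
          exact this
        exact ⟨haprop.1, haprop.2.1, lt_of_le_of_lt hle (hk₁.2 β hβ)⟩
      -- k₁ is a limit point of d k₂, hence in d k₂
      have hk₁S' : k₁ ∈ S' := hk₁T.1
      have hk₁L : k₁ ∈ L := hk₁S'.1.2
      obtain ⟨β₀, hβ₀⟩ := hk₁L.1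
      have hk₁mem : k₁ ∈ d k₂ := by
        have hLC := (hd k₂ hk₂T).1
        set s := d k₂ ∩ Set.Iio k₁ with hsdef
        have hscof : ∀ β < k₁, ∃ j ∈ s, β < j := by
          intro β hβ
          obtain ⟨h1, h2, h3⟩ := hsmall β hβ
          exact ⟨a β k₂, ⟨h1, h3⟩, h2⟩
        obtain ⟨j₀, hj₀, _⟩ := hscof β₀ hβ₀
        refine hLC.2.1 s Set.inter_subset_left ⟨j₀, hj₀⟩ k₁ ⟨fun x hx => hx.2.le, ?_⟩ hk₁₂
        intro u hu
        by_contra hlt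
        obtain ⟨j, hj1, hj2⟩ := hscof u (not_le.1 hlt)
        exact absurd (hu hj1) (not_le.2 hj2)
      have : k₁ ∈ d k₂ ∩ S' := ⟨hk₁mem, hk₁S'⟩
      rw [(hd k₂ hk₂T).2] at this
      exact this
    obtain ⟨ν, hν⟩ := hclaim
    have hT₁stat : IsStatIn {k | k ∈ T ∧ ν < k} := by
      have := hν ν
      exact stat_mono (fun k hk => ⟨hk.1, hk.2.1⟩) this
    obtain ⟨γ₀, hγ₀⟩ := fodor hreg hunc hinit hT₁stat (fun k => a ν k)
      (fun k hk => (ha ν k ⟨hk.1, hk.2⟩).2.2)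
    refine ⟨{k | k ∈ T ∧ ν < k ∧ γ₀ < a ν k}, {k | (k ∈ T ∧ ν < k) ∧ a ν k = γ₀},
      fun k hk => hk.1.1.1.1, fun k hk => hk.1.1.1.1.1, ?_, hν γ₀, hγ₀⟩
    ext k
    simp only [Set.mem_inter_iff, Set.mem_setOf_eq, Set.mem_empty_iff_false, iff_false]
    rintro ⟨⟨_, _, h1⟩, ⟨_, h2⟩⟩
    rw [h2] at h1
    exact lt_irrefl _ h1
end Split
section Simul
variable {α : Type*} [LinearOrder α] [WellFoundedLT α]
variable (hreg : (#α).IsRegular) (hunc : ℵ₀ < #α) (hinit : ∀ a : α, #(Set.Iio a) < #α)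

include hreg hunc hinit in
lemma simul_split {R : Set (Set α)} (hR : #(Set (↥R)) < #α) (hRne : R.Nonempty)
    (hstat : ∀ y ∈ R, IsStatIn y) :
    ∃ x : Set α, IsStatIn x ∧ ∀ y ∈ R, IsStatIn (y ∩ x) ∧ IsStatIn (y \ x) := by
  classical
  set pat : α → Set (↥R) := fun k => {y | k ∈ (y : Set α)} with hpat
  set cell : Set (↥R) → Set α := fun P => {k | pat k = P} with hcell
  -- split every stationary cell
  have hsplit : ∀ P : Set (↥R), ∃ uv : Set α × Set α, IsStatIn (cell P) →
      (uv.1 ⊆ cell P ∧ uv.2 ⊆ cell P ∧ uv.1 ∩ uv.2 = ∅ ∧ IsStatIn uv.1 ∧ IsStatIn uv.2) := by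
    intro P
    by_cases h : IsStatIn (cell P)
    · obtain ⟨u, v, h1, h2, h3, h4, h5⟩ := split_stat hreg hunc hinit h
      exact ⟨(u, v), fun _ => ⟨h1, h2, h3, h4, h5⟩⟩
    · exact ⟨(∅, ∅), fun hh => absurd hh h⟩
  choose uv huv using hsplit
  set x := {k | ∃ P, IsStatIn (cell P) ∧ k ∈ (uv P).1} with hx
  -- every stationary y ∈ R contains a stationary cell
  have hcellstat : ∀ y (hy : y ∈ R), ∃ P : Set (↥R), (⟨y, hy⟩ : ↥R) ∈ P ∧
      IsStatIn (cell P) := by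
    intro y hy
    have hdecomp : y = ⋃₀ (cell '' {P | (⟨y, hy⟩ : ↥R) ∈ P}) := by
      ext k
      constructor
      · intro hk
        exact ⟨cell (pat k), ⟨pat k, hk, rfl⟩, rfl⟩
      · rintro ⟨_, ⟨P, hP, rfl⟩, hk⟩
        have : pat k = P := hk
        have : (⟨y, hy⟩ : ↥R) ∈ pat k := this ▸ hP
        exact this
    have hcard : #(cell '' {P | (⟨y, hy⟩ : ↥R) ∈ P}) < #α := by
      refine lt_of_le_of_lt (le_trans Cardinal.mk_image_le ?_) hR
      exact Cardinal.mk_set_le _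
    obtain ⟨z, hz, hzstat⟩ := stat_of_sUnion hreg hunc hinit hcard
      (hdecomp ▸ hstat y hy)
    obtain ⟨P, hP, rfl⟩ := hz
    exact ⟨P, hP, hzstat⟩
  have hcellsub : ∀ (y) (hy : y ∈ R) (P : Set (↥R)), (⟨y, hy⟩ : ↥R) ∈ P → cell P ⊆ y := by
    intro y hy P hP k hk
    have : pat k = P := hk
    have : (⟨y, hy⟩ : ↥R) ∈ pat k := this ▸ hP
    exact this
  have hmain : ∀ y ∈ R, IsStatIn (y ∩ x) ∧ IsStatIn (y \ x) := by
    intro y hy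
    obtain ⟨P, hP, hPstat⟩ := hcellstat y hy
    obtain ⟨hu, hv, hdisj, hustat, hvstat⟩ := huv P hPstat
    constructor
    · refine stat_mono ?_ hustat
      intro k hk
      exact ⟨hcellsub y hy P hP (hu hk), P, hPstat, hk⟩
    · refine stat_mono ?_ hvstat
      intro k hk
      refine ⟨hcellsub y hy P hP (hv hk), ?_⟩
      rintro ⟨P', hP'stat, hk'⟩
      have h1 : k ∈ cell P' := (huv P' hP'stat).1 hk'
      have h2 : k ∈ cell P := hv hk
      have : P' = P := by rw [← h1, ← h2]
      rw [this] at hk'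
      have : k ∈ (uv P).1 ∩ (uv P).2 := ⟨hk', hk⟩
      rw [hdisj] at this
      exact this
  obtain ⟨y₀, hy₀⟩ := hRne
  obtain ⟨P, hP, hPstat⟩ := hcellstat y₀ hy₀
  obtain ⟨hu, _, _, hustat, _⟩ := huv P hPstat
  refine ⟨x, ?_, hmain⟩
  exact stat_mono (fun k hk => ⟨P, hPstat, hk⟩) hustat
end Simul

universe u
section Measure
variable {α : Type u} [LinearOrder α] [WellFoundedLT α]
variable (hreg : (#α).IsRegular) (hunc : ℵ₀ < #α) (hinit : ∀ a : α, #(Set.Iio a) < #α)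

lemma small_not_mem {U : Ultrafilter α} (hU : IsMeasureOn U) {x : Set α}
    (hx : #x < #α) : x ∉ U :=
  fun h => absurd (hU.1 x h) (ne_of_lt hx)

lemma small_compl_mem {U : Ultrafilter α} (hU : IsMeasureOn U) {x : Set α}
    (hx : #x < #α) : xᶜ ∈ U :=
  Ultrafilter.compl_mem_iff_notMem.2 (small_not_mem hU hx)

lemma mem_big {U : Ultrafilter α} (hU : IsMeasureOn U) (hunc : ℵ₀ < #α) {x : Set α}
    (hx : x ∈ U) : ∃ k₁ ∈ x, ∃ k₂ ∈ x, k₁ ≠ k₂ := by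
  have h1 : 1 < #x := by
    rw [hU.1 x hx]
    exact lt_trans Cardinal.one_lt_aleph0 hunc
  rw [Cardinal.one_lt_iff_nontrivial] at h1
  obtain ⟨⟨k₁, hk₁⟩, ⟨k₂, hk₂⟩, hne⟩ := h1
  exact ⟨k₁, hk₁, k₂, hk₂, fun h => hne (Subtype.ext h)⟩

include hunc in
lemma power_lt {U : Ultrafilter α} (hU : IsMeasureOn U) {β : Type u} (hβ : #β < #α) :
    #(Set β) < #α := by
  classical
  by_contra h
  obtain ⟨h⟩ := (Cardinal.le_def α (Set β)).1 (not_lt.1 h)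
  set X : β → Set α := fun i => {k | i ∈ h k} with hX
  set A : β → Set α := fun i => {k | i ∈ h k ↔ X i ∈ U} with hA
  have hAU : ∀ i, A i ∈ U := by
    intro i
    by_cases hXi : X i ∈ U
    · refine Filter.mem_of_superset hXi ?_
      intro k hk
      exact iff_of_true hk hXi
    · refine Filter.mem_of_superset (Ultrafilter.compl_mem_iff_notMem.2 hXi) ?_
      intro k hk
      simp only [hA, Set.mem_setOf_eq]
      simp only [hX] at hk hXi ⊢
      exact iff_of_false hk hXi
  have hInt : ⋂₀ (Set.range A) ∈ U := by
    refine hU.2 _ (lt_of_le_of_lt Cardinal.mk_range_le hβ) ?_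
    rintro x ⟨i, rfl⟩
    exact hAU i
  obtain ⟨k₁, hk₁, k₂, hk₂, hne⟩ := mem_big hU hunc hInt
  apply hne
  apply h.injective
  ext i
  have h1 := hk₁ (A i) (Set.mem_range_self i)
  have h2 := hk₂ (A i) (Set.mem_range_self i)
  simp only [hA, Set.mem_setOf_eq] at h1 h2
  rw [h1, h2]
end Measure
section Normal
variable {α : Type u} [LinearOrder α] [WellFoundedLT α]
variable (hreg : (#α).IsRegular) (hunc : ℵ₀ < #α) (hinit : ∀ a : α, #(Set.Iio a) < #α)

include hunc in
lemma exists_normal {U : Ultrafilter α} (hU : IsMeasureOn U) :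
    ∃ W : Ultrafilter α, IsNormalMeasureOn W := by
  classical
  set S : Set (α → α) := {f | ∀ γ : α, {k | f k = γ} ∉ U} with hSdef
  have hidS : id ∈ S := by
    intro γ
    apply small_not_mem hU
    have : {k : α | id k = γ} = {γ} := by ext k; simp
    rw [this, Cardinal.mk_singleton]
    exact lt_trans Cardinal.one_lt_aleph0 hunc
  -- a ≺-minimal element of S
  have hmin : ∃ f ∈ S, ∀ g ∈ S, {k | g k < f k} ∉ U := by
    by_contra hc
    push_neg at hc
    have hstep : ∀ f : α → α, ∃ g : α → α, f ∈ S → (g ∈ S ∧ {k | g k < f k} ∈ U) := by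
      intro f
      by_cases hf : f ∈ S
      · obtain ⟨g, hg1, hg2⟩ := hc f hf
        exact ⟨g, fun _ => ⟨hg1, hg2⟩⟩
      · exact ⟨f, fun h => absurd h hf⟩
    choose nxt hnxt using hstep
    set seq : ℕ → (α → α) := fun n => nxt^[n] id with hseq
    have hseqS : ∀ n, seq n ∈ S := by
      intro n
      induction n with
      | zero => exact hidS
      | succ p ih =>
        have : seq (p + 1) = nxt (seq p) := by simp [hseq, Function.iterate_succ_apply']
        rw [this]
        exact (hnxt (seq p) ih).1
    have hdesc : ∀ n, {k | seq (n + 1) k < seq n k} ∈ U := by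
      intro n
      have heq : seq (n + 1) = nxt (seq n) := by simp [hseq, Function.iterate_succ_apply']
      rw [heq]
      exact (hnxt (seq n) (hseqS n)).2
    have hInt : ⋂₀ (Set.range fun n => {k | seq (n + 1) k < seq n k}) ∈ U := by
      refine hU.2 _ ?_ ?_
      · have : Countable ↥(Set.range fun n => {k | seq (n + 1) k < seq n k}) :=
          Set.countable_range _
        exact lt_of_le_of_lt Cardinal.mk_le_aleph0 hunc
      · rintro x ⟨n, rfl⟩
        exact hdesc n
    obtain ⟨k, hk⟩ := Ultrafilter.nonempty_of_mem hInt
    have hdk : ∀ n, seq (n + 1) k < seq n k :=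
      fun n => hk _ (Set.mem_range_self n)
    have hne : (Set.range fun n => seq n k).Nonempty := ⟨seq 0 k, Set.mem_range_self 0⟩
    obtain ⟨m, hm⟩ := wellFounded_lt.min_mem _ hne
    exact wellFounded_lt.not_lt_min (Set.range fun n => seq n k) (Set.mem_range_self (m + 1))
      (by rw [← hm]; exact hdk m)
  obtain ⟨f, hfS, hfmin⟩ := hmin
  set W := Ultrafilter.map f U with hW
  have hmemW : ∀ x : Set α, x ∈ W ↔ f ⁻¹' x ∈ U := fun x => Iff.rfl
  have hWuniform : ∀ x ∈ W, #x = #α := by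
    intro x hx
    refine le_antisymm (Cardinal.mk_set_le x) ?_
    by_contra hlt
    have hxsmall : #x < #α := not_le.1 hlt
    have hG : ⋂₀ (Set.range fun γ : x => {k | f k = (γ : α)}ᶜ) ∈ U := by
      refine hU.2 _ (lt_of_le_of_lt Cardinal.mk_range_le hxsmall) ?_
      rintro y ⟨γ, rfl⟩
      exact Ultrafilter.compl_mem_iff_notMem.2 (hfS γ)
    have hpre : f ⁻¹' x ∈ U := hx
    obtain ⟨k, hk⟩ := Ultrafilter.nonempty_of_mem (U.inter_sets hpre hG)
    have hfk : f k ∈ x := hk.1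
    have := hk.2 _ (Set.mem_range_self (⟨f k, hfk⟩ : x))
    exact this rfl
  have hWcomplete : ∀ F : Set (Set α), #F < #α → (∀ y ∈ F, y ∈ W) → ⋂₀ F ∈ W := by
    intro F hF hFW
    have heq : f ⁻¹' (⋂₀ F) = ⋂₀ ((fun y => f ⁻¹' y) '' F) := by
      rw [Set.sInter_image]
      exact Set.preimage_sInter
    rw [hmemW, heq]
    refine hU.2 _ (lt_of_le_of_lt Cardinal.mk_image_le hF) ?_
    rintro y ⟨z, hz, rfl⟩
    exact hFW z hz
  refine ⟨W, ⟨hWuniform, hWcomplete⟩, ?_⟩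
  intro A hA
  rw [hmemW]
  by_contra hD
  have hZ : {k | ∃ i, i < f k ∧ f k ∉ A i} ∈ U := by
    have := Ultrafilter.compl_mem_iff_notMem.2 hD
    refine Filter.mem_of_superset this ?_
    intro k hk
    simp only [Set.mem_compl_iff, Set.mem_preimage, Set.mem_setOf_eq] at hk ⊢
    push_neg at hk
    exact hk
  have hgex : ∀ k : α, ∃ i, (∃ i', i' < f k ∧ f k ∉ A i') → (i < f k ∧ f k ∉ A i) := by
    intro k
    by_cases h : ∃ i', i' < f k ∧ f k ∉ A i'
    · obtain ⟨i, h1, h2⟩ := h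
      exact ⟨i, fun _ => ⟨h1, h2⟩⟩
    · exact ⟨f k, fun hh => absurd hh h⟩
  choose g hg using hgex
  have hgS : g ∉ S → ∃ γ, {k | g k = γ} ∈ U := by
    intro h
    simp only [hSdef, Set.mem_setOf_eq, not_forall, not_not] at h
    exact h
  have hglt : {k | g k < f k} ∈ U := by
    refine Filter.mem_of_superset hZ ?_
    intro k hk
    exact (hg k hk).1
  obtain ⟨γ, hγ⟩ := hgS (fun hgmem => hfmin g hgmem hglt)
  have hAγ : f ⁻¹' (A γ) ∈ U := hA γ
  obtain ⟨k, hk⟩ := Ultrafilter.nonempty_of_mem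
    (U.inter_sets (U.inter_sets hZ hγ) hAγ)
  obtain ⟨⟨hkZ, hkγ⟩, hkA⟩ := hk
  have h1 := (hg k hkZ).2
  have h2 : g k = γ := hkγ
  rw [h2] at h1
  exact h1 hkA
end Normal
section ClubMem
variable {α : Type u} [LinearOrder α] [WellFoundedLT α]
variable (hreg : (#α).IsRegular) (hunc : ℵ₀ < #α) (hinit : ∀ a : α, #(Set.Iio a) < #α)

lemma club_mem_of_statbase {U : Ultrafilter α} {B : Set (Set α)}
    (hBstat : ∀ b ∈ B, IsStatIn b) (hbase : IsBaseFor B U) {c : Set α}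
    (hc : IsClubIn c) : c ∈ U := by
  by_contra h
  obtain ⟨b, hbB, hbsub⟩ := hbase.2 cᶜ (Ultrafilter.compl_mem_iff_notMem.2 h)
  obtain ⟨k, hk1, hk2⟩ := hBstat b hbB c hc
  exact hbsub hk1 hk2

include hunc hinit in
lemma club_mem_normal {W : Ultrafilter α} (hW : IsNormalMeasureOn W) {c : Set α}
    (hc : IsClubIn c) : c ∈ W := by
  classical
  set A : α → Set α := fun i => {k | ∃ j ∈ c, i < j ∧ j ≤ k} with hA
  have hAW : ∀ i, A i ∈ W := by
    intro i
    obtain ⟨j, hjc, hij⟩ := hc.2 i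
    have hsub : Set.Ici j ⊆ A i := fun k hk => ⟨j, hjc, hij, hk⟩
    refine Filter.mem_of_superset ?_ hsub
    have : (Set.Iio j)ᶜ = Set.Ici j := by ext x; simp
    rw [← this]
    exact small_compl_mem hW.1 (hinit j)
  have hD : {k | ∀ i < k, k ∈ A i} ∈ W := hW.2 A hAW
  set N := {k : α | ∀ j : α, ¬ j < k} with hN
  have hNsmall : #N < #α := by
    have hsub : N.Subsingleton := by
      intro k hk k' hk'
      rcases lt_trichotomy k k' with h | h | h
      · exact absurd h (hk' k)
      · exact h
      · exact absurd h (hk k')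
    exact lt_of_le_of_lt (Cardinal.mk_le_one_iff_set_subsingleton.2 hsub)
      (lt_trans Cardinal.one_lt_aleph0 hunc)
  have hfinal : {k | ∀ i < k, k ∈ A i} ∩ Nᶜ ⊆ c := by
    rintro k ⟨hkD, hkN⟩
    simp only [hN, Set.mem_compl_iff, Set.mem_setOf_eq] at hkN
    push_neg at hkN
    obtain ⟨i₀, hi₀⟩ := hkN
    by_cases hkc : k ∈ c
    · exact hkc
    set s := c ∩ Set.Iio k with hs
    have hsne : s.Nonempty := by
      obtain ⟨j, hjc, _, hjk⟩ := hkD i₀ hi₀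
      exact ⟨j, hjc, lt_of_le_of_ne hjk (fun h => hkc (h ▸ hjc))⟩
    refine hc.1 s Set.inter_subset_left hsne k ⟨fun x hx => hx.2.le, ?_⟩
    intro u hu
    by_contra hlt
    obtain ⟨j, hjc, huj, hjk⟩ := hkD u (not_le.1 hlt)
    have hjs : j ∈ s := ⟨hjc, lt_of_le_of_ne hjk (fun h => hkc (h ▸ hjc))⟩
    exact absurd (hu hjs) (not_le.2 huj)
  exact Filter.mem_of_superset (W.inter_sets hD (small_compl_mem hW.1 hNsmall)) hfinal

include hunc hinit in
lemma normal_mem_stat {W : Ultrafilter α} (hW : IsNormalMeasureOn W) {x : Set α}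
    (hx : x ∈ W) : IsStatIn x := by
  intro c hc
  exact Ultrafilter.nonempty_of_mem (W.inter_sets hx (club_mem_normal hunc hinit hW hc))
end ClubMem
section Final
variable {α : Type u} [LinearOrder α] [WellFoundedLT α]
variable (hreg : (#α).IsRegular) (hunc : ℵ₀ < #α) (hinit : ∀ a : α, #(Set.Iio a) < #α)

include hunc hinit in
lemma univ_mem_clubFilterSets : (Set.univ : Set α) ∈ ClubFilterSets α :=
  ⟨Set.univ, club_univ hunc hinit, subset_rfl⟩

include hunc hinit in
lemma interclub_base {U : Ultrafilter α} {B : Set (Set α)} (hbase : IsBaseFor B U)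
    (hclubs : ∀ c : Set α, IsClubIn c → c ∈ U) : IsBaseFor (InterClubBase B) U := by
  constructor
  · rintro y ⟨b, hbB, c', ⟨c, hc, hcc'⟩, rfl⟩
    exact U.inter_sets (hbase.1 b hbB) (Filter.mem_of_superset (hclubs c hc) hcc')
  · intro u hu
    obtain ⟨b, hbB, hbu⟩ := hbase.2 u hu
    refine ⟨b ∩ Set.univ, ⟨b, hbB, Set.univ, univ_mem_clubFilterSets hunc hinit, rfl⟩, ?_⟩
    rw [Set.inter_univ]
    exact hbu

include hreg hunc hinit in
lemma interclub_members_stat {B : Set (Set α)} (hBstat : ∀ b ∈ B, IsStatIn b) :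
    ∀ y ∈ InterClubBase B, IsStatIn y := by
  rintro y ⟨b, hbB, c', ⟨c, hc, hcc'⟩, rfl⟩
  have hbc : IsStatIn (b ∩ c) := stat_inter_club hreg hunc hinit (hBstat b hbB) hc
  refine stat_mono ?_ hbc
  intro k hk
  exact ⟨hk.1, hcc' hk.2⟩

include hunc hinit in
lemma empty_not_stat : ¬ IsStatIn (∅ : Set α) := by
  intro h
  obtain ⟨k, hk, _⟩ := h Set.univ (club_univ hunc hinit)
  exact hk

include hunc hinit in
lemma univ_stat : IsStatIn (Set.univ : Set α) := by
  intro c hc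
  have hne : Nonempty α := by
    by_contra h
    rw [not_nonempty_iff] at h
    rw [Cardinal.mk_eq_zero α] at hunc
    exact absurd hunc (by simp)
  obtain ⟨a⟩ := hne
  obtain ⟨b, hb1, _⟩ := hc.2 a
  exact ⟨b, Set.mem_univ _, hb1⟩
end Final

/-- For a measurable cardinal `κ`:
`κ ≤ r^cl_κ ≤ u^cl*_κ ≤ u^nm*_κ`, `u^cl*_κ ≤ u^cl_κ ≤ u^nm_κ` and `u^nm*_κ ≤ u^nm_κ`.
Here `κ` is represented as a well-ordered type `α` of regular uncountable cardinality,
all of whose proper initial segments are of size `< #α`, carrying a measure. -/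
theorem ultrafilterNumber_inequalities {α : Type*} [LinearOrder α] [WellFoundedLT α]
    (hreg : (#α).IsRegular) (hunc : ℵ₀ < #α)
    (hinit : ∀ a : α, #(Set.Iio a) < #α)
    (hmeas : ∃ U : Ultrafilter α, IsMeasureOn U) :
    #α ≤ statReapingNumber α ∧ statReapingNumber α ≤ uClStar α ∧
      uClStar α ≤ uNmStar α ∧ uClStar α ≤ uCl α ∧ uCl α ≤ uNm α ∧ uNmStar α ≤ uNm α := by
  classical
  obtain ⟨U₀, hU₀⟩ := hmeas
  obtain ⟨W, hWnm⟩ := exists_normal hunc hU₀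
  set BW : Set (Set α) := {x : Set α | x ∈ W} with hBW
  have hBWstat : ∀ b ∈ BW, IsStatIn b := fun b hb => normal_mem_stat hunc hinit hWnm hb
  have hBWbase : IsBaseFor BW W := ⟨fun b hb => hb, fun u hu => ⟨u, hu, subset_rfl⟩⟩
  have hBWbase' : IsBaseFor (InterClubBase BW) W :=
    interclub_base hunc hinit hBWbase (fun c hc => club_mem_normal hunc hinit hWnm hc)
  -- nonemptiness of the defining sets
  have hNmSet : (#BW) ∈ { c : Cardinal | ∃ B : Set (Set α), (∀ b ∈ B, IsStatIn b) ∧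
      (∃ U : Ultrafilter α, IsNormalMeasureOn U ∧ IsBaseFor B U) ∧ c = #B } :=
    ⟨BW, hBWstat, ⟨W, hWnm, hBWbase⟩, rfl⟩
  have hNmStarSet : (#BW) ∈ { c : Cardinal | ∃ B : Set (Set α), (∀ b ∈ B, IsStatIn b) ∧
      (∃ U : Ultrafilter α, IsNormalMeasureOn U ∧ IsBaseFor (InterClubBase B) U) ∧ c = #B } :=
    ⟨BW, hBWstat, ⟨W, hWnm, hBWbase'⟩, rfl⟩
  have hClSet : (#BW) ∈ { c : Cardinal | ∃ B : Set (Set α), (∀ b ∈ B, IsStatIn b) ∧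
      (∃ U : Ultrafilter α, IsBaseFor B U) ∧ c = #B } :=
    ⟨BW, hBWstat, ⟨W, hBWbase⟩, rfl⟩
  have hClStarSet : (#BW) ∈ { c : Cardinal | ∃ B : Set (Set α), (∀ b ∈ B, IsStatIn b) ∧
      (∃ U : Ultrafilter α, IsBaseFor (InterClubBase B) U) ∧ c = #B } :=
    ⟨BW, hBWstat, ⟨W, hBWbase'⟩, rfl⟩
  have hRSet : (#{x : Set α | IsStatIn x}) ∈ { c : Cardinal | ∃ R : Set (Set α),
      (∀ y ∈ R, IsStatIn y) ∧ (∀ x : Set α, IsStatIn x → ∃ y ∈ R, ¬ StatSplits x y) ∧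
      c = #R } := by
    refine ⟨{x : Set α | IsStatIn x}, fun y hy => hy, fun x hx => ⟨x, hx, ?_⟩, rfl⟩
    rintro ⟨-, h2⟩
    rw [Set.diff_self] at h2
    exact empty_not_stat hunc hinit h2
  refine ⟨?_, ?_, ?_, ?_, ?_, ?_⟩
  · -- κ ≤ r
    refine le_csInf ⟨_, hRSet⟩ ?_
    rintro cc ⟨R, hRstat, hreap, rfl⟩
    by_contra hlt
    have hRcard : #R < #α := not_le.1 hlt
    have hRne : R.Nonempty := by
      rcases Set.eq_empty_or_nonempty R with rfl | h
      · obtain ⟨y, hy, -⟩ := hreap Set.univ (univ_stat hunc hinit)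
        exact absurd hy (Set.notMem_empty y)
      · exact h
    have hpow : #(Set (↥R)) < #α := power_lt hunc hU₀ hRcard
    obtain ⟨x, hxstat, hxsplits⟩ := simul_split hreg hunc hinit hpow hRne hRstat
    obtain ⟨y, hyR, hns⟩ := hreap x hxstat
    exact hns ⟨(hxsplits y hyR).1, (hxsplits y hyR).2⟩
  · -- r ≤ uClStar
    refine le_csInf ⟨_, hClStarSet⟩ ?_
    rintro cc ⟨B, hBstat, ⟨U, hbase⟩, rfl⟩
    refine csInf_le' ?_
    refine ⟨B, hBstat, ?_, rfl⟩
    intro x hx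
    have hclubsU : ∀ c : Set α, IsClubIn c → c ∈ U :=
      fun c hc => club_mem_of_statbase
        (interclub_members_stat hreg hunc hinit hBstat) hbase hc
    rcases Ultrafilter.mem_or_compl_mem U x with hxU | hxU
    · obtain ⟨y, ⟨b, hbB, c', ⟨c, hc, hcc'⟩, rfl⟩, hyx⟩ := hbase.2 x hxU
      refine ⟨b, hbB, ?_⟩
      rintro ⟨-, h2⟩
      refine absurd h2 (not_stat_iff.2 ⟨c, hc, ?_⟩)
      ext k
      simp only [Set.mem_inter_iff, Set.mem_diff, Set.mem_empty_iff_false, iff_false]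
      rintro ⟨⟨hkb, hkx⟩, hkc⟩
      exact hkx (hyx ⟨hkb, hcc' hkc⟩)
    · obtain ⟨y, ⟨b, hbB, c', ⟨c, hc, hcc'⟩, rfl⟩, hyx⟩ := hbase.2 xᶜ hxU
      refine ⟨b, hbB, ?_⟩
      rintro ⟨h1, -⟩
      refine absurd h1 (not_stat_iff.2 ⟨c, hc, ?_⟩)
      ext k
      simp only [Set.mem_inter_iff, Set.mem_empty_iff_false, iff_false]
      rintro ⟨⟨hkb, hkx⟩, hkc⟩
      exact hyx ⟨hkb, hcc' hkc⟩ hkx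
  · -- uClStar ≤ uNmStar
    refine csInf_le_csInf (OrderBot.bddBelow _) ⟨_, hNmStarSet⟩ ?_
    rintro cc ⟨B, h1, ⟨U, _, hbase⟩, h3⟩
    exact ⟨B, h1, ⟨U, hbase⟩, h3⟩
  · -- uClStar ≤ uCl
    refine le_csInf ⟨_, hClSet⟩ ?_
    rintro cc ⟨B, hBstat, ⟨U, hbase⟩, rfl⟩
    refine csInf_le' ⟨B, hBstat, ⟨U, ?_⟩, rfl⟩
    exact interclub_base hunc hinit hbase
      (fun c hc => club_mem_of_statbase hBstat hbase hc)
  · -- uCl ≤ uNm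
    refine csInf_le_csInf (OrderBot.bddBelow _) ⟨_, hNmSet⟩ ?_
    rintro cc ⟨B, h1, ⟨U, _, hbase⟩, h3⟩
    exact ⟨B, h1, ⟨U, hbase⟩, h3⟩
  · -- uNmStar ≤ uNm
    refine le_csInf ⟨_, hNmSet⟩ ?_
    rintro cc ⟨B, hBstat, ⟨U, hnm, hbase⟩, rfl⟩
    refine csInf_le' ⟨B, hBstat, ⟨U, hnm, ?_⟩, rfl⟩
    exact interclub_base hunc hinit hbase
      (fun c hc => club_mem_of_statbase hBstat hbase hc)
end

section
/- Let κ be a measurable cardinal. Then the measure ultrafilter number equals the normal measure ultrafilter number: the least cardinality of a family of stationary subsets of κ forming a base for some measure on κ equals the least cardinality of a family of stationary subsets of κ forming a base for some normal measure on κ. -/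
open Set Cardinal

/-- The measure ultrafilter number `u^me_κ`: the least cardinality of a family of stationary
sets forming a base for some measure on `κ`. -/
noncomputable def uMe (α : Type*) [LinearOrder α] : Cardinal :=
  sInf { c : Cardinal | ∃ B : Set (Set α), (∀ b ∈ B, IsStatIn b) ∧
    (∃ U : Ultrafilter α, IsMeasureOn U ∧ IsBaseFor B U) ∧ c = #B }

namespace UMeAux
set_option linter.unusedSectionVars false
variable {α : Type*} [LinearOrder α] {U : Ultrafilter α}

lemma notMem_of_small (hU : IsMeasureOn U) {x : Set α} (hx : #x < #α) : x ∉ U :=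
  fun h => absurd (hU.1 x h) hx.ne

lemma compl_mem_of_small (hU : IsMeasureOn U) {x : Set α} (hx : #x < #α) : xᶜ ∈ U :=
  (Ultrafilter.compl_mem_iff_notMem).mpr (notMem_of_small hU hx)

lemma iInter_mem (hU : IsMeasureOn U) {ι : Type*} (g : ι → Set α)
    (hsm : #(Set.range g) < #α) (hm : ∀ i, g i ∈ U) : (⋂ i, g i) ∈ U := by
  rw [← Set.sInter_range]
  exact hU.2 _ hsm (by rintro x ⟨i, rfl⟩; exact hm i)

lemma exists_mem_of_iUnion_mem (hU : IsMeasureOn U) {ι : Type*} (g : ι → Set α)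
    (hsm : #(Set.range g) < #α) (hm : (⋃ i, g i) ∈ U) : ∃ i, g i ∈ U := by
  by_contra h
  push_neg at h
  have hcard : #(Set.range (fun i => (g i)ᶜ)) < #α := by
    calc #(Set.range (fun i => (g i)ᶜ)) = #(compl '' Set.range g) := by
          rw [← Set.range_comp]; rfl
    _ ≤ #(Set.range g) := Cardinal.mk_image_le
    _ < #α := hsm
  have h2 : (⋂ i, (g i)ᶜ) ∈ U :=
    iInter_mem hU _ hcard (fun i => (Ultrafilter.compl_mem_iff_notMem).mpr (h i))
  rw [← Set.compl_iUnion] at h2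
  exact (Ultrafilter.compl_mem_iff_notMem).mp h2 hm

lemma mk_Iic_lt (hunc : ℵ₀ < #α) (hinit : ∀ a : α, #(Set.Iio a) < #α) (a : α) :
    #(Set.Iic a) < #α := by
  have he : (Set.Iic a) = insert a (Set.Iio a) := by
    ext x; simp [le_iff_lt_or_eq, or_comm]
  rw [he]
  calc #(insert a (Set.Iio a) : Set α) ≤ #(Set.Iio a) + 1 := Cardinal.mk_insert_le
  _ < #α := Cardinal.add_lt_of_lt hunc.le (hinit a)
      ((one_lt_aleph0.trans hunc))

lemma Ioi_mem (hU : IsMeasureOn U) (hunc : ℵ₀ < #α) (hinit : ∀ a : α, #(Set.Iio a) < #α)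
    (a : α) : Set.Ioi a ∈ U := by
  rw [← Set.compl_Iic]
  exact compl_mem_of_small hU (mk_Iic_lt hunc hinit a)

section WF
set_option linter.unusedSectionVars false
variable [WellFoundedLT α]

/-- the ultrapower relation on functions -/
def rU (U : Ultrafilter α) (f g : α → α) : Prop := {i | f i < g i} ∈ U

lemma rU_wf (U : Ultrafilter α) (hU : IsMeasureOn U) (hunc : ℵ₀ < #α) :
    WellFounded (rU U) := by
  have : IsStrictOrder (α → α) (rU U) :=
    { irrefl := fun f hf => by
        have he : {i | f i < f i} = (∅ : Set α) := by ext i; simp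
        have hf' : {i | f i < f i} ∈ U := hf
        rw [he] at hf'
        exact Ultrafilter.empty_notMem hf'
      trans := fun f g h h1 h2 =>
        Filter.mem_of_superset (Filter.inter_mem h1 h2)
          (fun i hi => lt_trans hi.1 hi.2) }
  rw [RelEmbedding.wellFounded_iff_isEmpty]
  constructor
  intro emb
  have hmem : ∀ n : ℕ, {i | emb (n+1) i < emb n i} ∈ U :=
    fun n => emb.map_rel_iff.mpr (Nat.lt_succ_self n)
  have hcard : #(Set.range (fun n : ℕ => {i | emb (n+1) i < emb n i})) < #α := by
    exact lt_of_le_of_lt (Set.countable_range _).le_aleph0 hunc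
  have h2 : (⋂ n : ℕ, {i | emb (n+1) i < emb n i}) ∈ U := iInter_mem hU _ hcard hmem
  obtain ⟨i, hi⟩ := Filter.nonempty_of_mem h2
  simp only [Set.mem_iInter, Set.mem_setOf_eq] at hi
  exact (RelEmbedding.wellFounded_iff_isEmpty.mp wellFounded_lt).false
    (RelEmbedding.natGT (fun n => emb n i) hi)

lemma exists_normal (hunc : ℵ₀ < #α) (hinit : ∀ a : α, #(Set.Iio a) < #α)
    (U : Ultrafilter α) (hU : IsMeasureOn U) :
    ∃ (D : Ultrafilter α) (f : α → α), IsNormalMeasureOn D ∧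
      ∀ y : Set α, y ∈ D ↔ f ⁻¹' y ∈ U := by
  classical
  set S : Set (α → α) := {f | ∀ a : α, f ⁻¹' (Set.Ioi a) ∈ U} with hS
  have hid : (id : α → α) ∈ S := fun a => Ioi_mem hU hunc hinit a
  obtain ⟨f0, hf0S, hf0min⟩ := (rU_wf U hU hunc).has_min S ⟨id, hid⟩
  refine ⟨U.map f0, f0, ⟨⟨?uniform, ?complete⟩, ?normal⟩, fun y => Ultrafilter.mem_map⟩
  case uniform =>
    intro x hx
    rw [Ultrafilter.mem_map] at hx
    refine le_antisymm (Cardinal.mk_set_le x) ?_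
    by_contra hlt
    push_neg at hlt
    have hx' : #x < #α := hlt
    have hcov : f0 ⁻¹' x = ⋃ a : x, f0 ⁻¹' {(a : α)} := by
      ext j; simp
    rw [hcov] at hx
    have hcard : #(Set.range (fun a : x => f0 ⁻¹' {(a : α)})) < #α :=
      lt_of_le_of_lt Cardinal.mk_range_le hx'
    obtain ⟨a, ha⟩ := exists_mem_of_iUnion_mem hU _ hcard hx
    have h2 : f0 ⁻¹' (Set.Ioi (a : α)) ∈ U := hf0S (a : α)
    have := Filter.inter_mem ha h2
    obtain ⟨j, hj1, hj2⟩ := Filter.nonempty_of_mem this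
    simp only [Set.mem_preimage, Set.mem_singleton_iff] at hj1
    simp only [Set.mem_preimage, Set.mem_Ioi] at hj2
    rw [hj1] at hj2
    exact lt_irrefl _ hj2
  case complete =>
    intro F hF hFm
    rw [Ultrafilter.mem_map]
    have : f0 ⁻¹' ⋂₀ F = ⋂₀ ((f0 ⁻¹' ·) '' F) := by
      rw [Set.sInter_image, Set.preimage_sInter]
    rw [this]
    refine hU.2 _ (lt_of_le_of_lt Cardinal.mk_image_le hF) ?_
    rintro y ⟨x, hx, rfl⟩
    exact Ultrafilter.mem_map.mp (hFm x hx)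
  case normal =>
    intro x hx
    rw [Ultrafilter.mem_map]
    by_contra hT
    have hA : {j | ∃ i, i < f0 j ∧ f0 j ∉ x i} ∈ U := by
      have := (Ultrafilter.compl_mem_iff_notMem (f := U)).mpr hT
      refine Filter.mem_of_superset this ?_
      intro j hj
      simp only [Set.mem_compl_iff, Set.mem_preimage, Set.mem_setOf_eq] at hj ⊢
      push_neg at hj
      obtain ⟨i, hi1, hi2⟩ := hj
      exact ⟨i, hi1, hi2⟩
    set g : α → α := fun j =>
      if h : ∃ i, i < f0 j ∧ f0 j ∉ x i then h.choose else f0 j with hg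
    have hgA : ∀ j ∈ {j | ∃ i, i < f0 j ∧ f0 j ∉ x i},
        g j < f0 j ∧ f0 j ∉ x (g j) := by
      intro j hj
      have hj' : ∃ i, i < f0 j ∧ f0 j ∉ x i := hj
      have heq : g j = hj'.choose := by rw [hg]; exact dif_pos hj'
      rw [heq]
      exact hj'.choose_spec
    have hrU : rU U g f0 :=
      Filter.mem_of_superset hA (fun j hj => (hgA j hj).1)
    have hgnS : g ∉ S := fun h => hf0min g h hrU
    simp only [hS, Set.mem_setOf_eq] at hgnS
    push_neg at hgnS
    obtain ⟨a, ha⟩ := hgnS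
    have hle : {j | g j ≤ a} ∈ U := by
      have := (Ultrafilter.compl_mem_iff_notMem (f := U)).mpr ha
      refine Filter.mem_of_superset this ?_
      intro j hj
      simp only [Set.mem_compl_iff, Set.mem_preimage, Set.mem_Ioi] at hj
      exact not_lt.mp hj
    have hB : {j | g j ≤ a} ∩ {j | ∃ i, i < f0 j ∧ f0 j ∉ x i} ∈ U :=
      Filter.inter_mem hle hA
    have hcov : {j | g j ≤ a} ∩ {j | ∃ i, i < f0 j ∧ f0 j ∉ x i}
        ⊆ ⋃ i : Set.Iic a, {j | g j = (i : α)} ∩ {j | ∃ i, i < f0 j ∧ f0 j ∉ x i} := by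
      rintro j ⟨hj1, hj2⟩
      exact Set.mem_iUnion.mpr ⟨⟨g j, hj1⟩, rfl, hj2⟩
    have hcard : #(Set.range (fun i : Set.Iic a =>
        {j | g j = (i : α)} ∩ {j | ∃ i, i < f0 j ∧ f0 j ∉ x i})) < #α :=
      lt_of_le_of_lt Cardinal.mk_range_le (mk_Iic_lt hunc hinit a)
    obtain ⟨i, hi⟩ := exists_mem_of_iUnion_mem hU _ hcard
      (Filter.mem_of_superset hB hcov)
    have hxi : f0 ⁻¹' (x (i : α)) ∈ U := hx (i : α)
    have := Filter.inter_mem hi hxi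
    obtain ⟨j, ⟨hj1, hj2⟩, hj3⟩ := Filter.nonempty_of_mem this
    have := (hgA j hj2).2
    rw [Set.mem_setOf_eq] at hj1
    rw [hj1] at this
    exact this hj3


lemma club_mem (hunc : ℵ₀ < #α) (hinit : ∀ a : α, #(Set.Iio a) < #α)
    {D : Ultrafilter α} (hD : IsNormalMeasureOn D)
    {c : Set α} (hc : IsClubIn c) : c ∈ D := by
  classical
  obtain ⟨hcl, hub⟩ := hc
  choose h hc1 hc2 using hub
  have hx : ∀ i, Set.Ioi (h i) ∈ D := fun i => Ioi_mem hD.1 hunc hinit (h i)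
  have hy : {k | ∀ i < k, k ∈ Set.Ioi (h i)} ∈ D := hD.2 _ hx
  have hzc : ({k : α | ∃ i, i < k}ᶜ).Subsingleton := by
    intro k1 hk1 k2 hk2
    simp only [Set.mem_compl_iff, Set.mem_setOf_eq, not_exists] at hk1 hk2
    exact le_antisymm (not_lt.mp (hk1 k2)) (not_lt.mp (hk2 k1))
  have hz : {k : α | ∃ i, i < k} ∈ D := by
    rw [← compl_compl {k : α | ∃ i, i < k}]
    refine compl_mem_of_small hD.1 ?_
    refine lt_of_le_of_lt (Cardinal.mk_le_one_iff_set_subsingleton.mpr hzc) ?_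
    exact lt_of_lt_of_le one_lt_aleph0 hunc.le
  refine Filter.mem_of_superset (Filter.inter_mem hy hz) ?_
  rintro k ⟨hky, hkz⟩
  simp only [Set.mem_setOf_eq] at hky hkz
  obtain ⟨i0, hi0⟩ := hkz
  set s : Set α := {b | b ∈ c ∧ b < k} with hs
  have hsc : s ⊆ c := fun b hb => hb.1
  have hsne : s.Nonempty := ⟨h i0, hc1 i0, hky i0 hi0⟩
  have hlub : IsLUB s k := by
    constructor
    · intro b hb; exact le_of_lt hb.2
    · intro m hm
      by_contra hmk
      push_neg at hmk
      have h1 : h m ∈ s := ⟨hc1 m, hky m hmk⟩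
      exact absurd (hm h1) (not_le.mpr (hc2 m))
  exact hcl s hsc hsne k hlub

lemma stat_of_mem (hunc : ℵ₀ < #α) (hinit : ∀ a : α, #(Set.Iio a) < #α)
    {D : Ultrafilter α} (hD : IsNormalMeasureOn D) {x : Set α} (hx : x ∈ D) :
    IsStatIn x :=
  fun c hc => Filter.nonempty_of_mem (Filter.inter_mem hx (club_mem hunc hinit hD hc))

end WF
end UMeAux

/-- For a measurable cardinal `κ` the measure ultrafilter number equals the normal measure
ultrafilter number: `u^me_κ = u^nm_κ`. Here `κ` is represented as a well-ordered type `α` of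
regular uncountable cardinality, all of whose proper initial segments are of size `< #α`,
carrying a measure. -/
theorem uMe_eq_uNm {α : Type*} [LinearOrder α] [WellFoundedLT α]
    (hreg : (#α).IsRegular) (hunc : ℵ₀ < #α)
    (hinit : ∀ a : α, #(Set.Iio a) < #α)
    (hmeas : ∃ U : Ultrafilter α, IsMeasureOn U) :
    uMe α = uNm α := by
  classical
  obtain ⟨U, hU⟩ := hmeas
  obtain ⟨D, f0, hD, hDm⟩ := UMeAux.exists_normal hunc hinit U hU
  have hWnm : #({x : Set α | x ∈ D} : Set (Set α)) ∈
      { c : Cardinal | ∃ B : Set (Set α), (∀ b ∈ B, IsStatIn b) ∧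
        (∃ V : Ultrafilter α, IsNormalMeasureOn V ∧ IsBaseFor B V) ∧ c = #B } :=
    ⟨{x : Set α | x ∈ D}, fun b hb => UMeAux.stat_of_mem hunc hinit hD hb,
      ⟨D, hD, ⟨fun b hb => hb, fun u hu => ⟨u, hu, subset_rfl⟩⟩⟩, rfl⟩
  have hsub : { c : Cardinal | ∃ B : Set (Set α), (∀ b ∈ B, IsStatIn b) ∧
        (∃ V : Ultrafilter α, IsNormalMeasureOn V ∧ IsBaseFor B V) ∧ c = #B } ⊆
      { c : Cardinal | ∃ B : Set (Set α), (∀ b ∈ B, IsStatIn b) ∧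
        (∃ V : Ultrafilter α, IsMeasureOn V ∧ IsBaseFor B V) ∧ c = #B } := by
    rintro c ⟨B, hstat, ⟨V, hV, hbase⟩, hc⟩
    exact ⟨B, hstat, ⟨V, hV.1, hbase⟩, hc⟩
  refine le_antisymm ?_ ?_
  · exact csInf_le_csInf (OrderBot.bddBelow _) ⟨_, hWnm⟩ hsub
  · refine le_csInf ⟨_, hsub hWnm⟩ ?_
    rintro b ⟨B, hstat, ⟨V, hV, hbase⟩, rfl⟩
    obtain ⟨DV, fV, hDV, hDVm⟩ := UMeAux.exists_normal hunc hinit V hV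
    set B' : Set (Set α) := (fun b => fV '' b) '' B with hB'
    have hmemDV : ∀ b ∈ B, fV '' b ∈ DV := by
      intro b hb
      rw [hDVm]
      exact Filter.mem_of_superset (hbase.1 b hb) (Set.subset_preimage_image fV b)
    have h1 : #B' ∈ { c : Cardinal | ∃ B : Set (Set α), (∀ b ∈ B, IsStatIn b) ∧
        (∃ W : Ultrafilter α, IsNormalMeasureOn W ∧ IsBaseFor B W) ∧ c = #B } := by
      refine ⟨B', ?_, ⟨DV, hDV, ?_, ?_⟩, rfl⟩
      · rintro b' ⟨b, hb, rfl⟩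
        exact UMeAux.stat_of_mem hunc hinit hDV (hmemDV b hb)
      · rintro b' ⟨b, hb, rfl⟩
        exact hmemDV b hb
      · intro u hu
        obtain ⟨b, hb, hsubu⟩ := hbase.2 _ ((hDVm u).mp hu)
        exact ⟨fV '' b, ⟨b, hb, rfl⟩, Set.image_subset_iff.mpr hsubu⟩
    calc sInf _ ≤ #B' := csInf_le (OrderBot.bddBelow _) h1
    _ ≤ #B := Cardinal.mk_image_le
end

section
/- Let κ be a measurable cardinal, let U be a normal measure on κ, and let B ⊆ U be a family of stationary sets with |B| ≤ κ. Then {b ∩ c : b ∈ B, c ∈ Cl} is not a base for U; consequently the normal measure* ultrafilter number u^nm*_κ is at least κ⁺. -/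
open Set Cardinal

namespace UNmAux

structure Ctx (α : Type*) [LinearOrder α] [WellFoundedLT α] : Prop where
  reg : (#α).IsRegular
  unc : ℵ₀ < #α
  init : ∀ a : α, #(Set.Iio a) < #α

variable {α : Type*} [LinearOrder α] [WellFoundedLT α]

noncomputable def sMin (s : Set α) (h : s.Nonempty) : α :=
  (IsWellFounded.wf (r := ((· < ·) : α → α → Prop))).min s h

lemma sMin_mem (s : Set α) (h : s.Nonempty) : sMin s h ∈ s := WellFounded.min_mem _ s h

lemma sMin_le (s : Set α) (h : s.Nonempty) {x : α} (hx : x ∈ s) : sMin s h ≤ x :=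
  not_lt.mp (WellFounded.not_lt_min _ s hx)

lemma add_one_lt (C : Ctx α) {c : Cardinal} (h : c < #α) : c + 1 < #α := by
  rcases lt_or_ge c ℵ₀ with h1 | h1
  · exact lt_of_lt_of_le (Cardinal.add_lt_aleph0 h1 Cardinal.one_lt_aleph0) C.unc.le
  · calc c + 1 ≤ c + c := add_le_add le_rfl (le_trans (by norm_num : (1 : Cardinal) ≤ ℵ₀) h1)
      _ = c := Cardinal.add_eq_self h1
      _ < #α := h

lemma exists_gt (C : Ctx α) (a : α) : ∃ b, a < b := by
  by_contra h
  push_neg at h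
  have huniv : (univ : Set α) = Iio a ∪ {a} := by
    rw [Set.Iio_union_right]
    ext x; simp [h x]
  have h2 : #α ≤ #(Iio a) + 1 := by
    calc #α = #(univ : Set α) := Cardinal.mk_univ.symm
      _ = #(Iio a ∪ {a} : Set α) := by rw [huniv]
      _ ≤ #(Iio a) + #({a} : Set α) := Cardinal.mk_union_le _ _
      _ = #(Iio a) + 1 := by rw [Cardinal.mk_singleton]
  exact absurd h2 (not_le.mpr (add_one_lt C (C.init a)))

lemma card_Iic_lt (C : Ctx α) (a : α) : #(Iic a) < #α := by
  obtain ⟨b, hb⟩ := exists_gt C a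
  exact lt_of_le_of_lt (Cardinal.mk_le_mk_of_subset fun x hx => lt_of_le_of_lt hx hb) (C.init b)

lemma bddAbove_of_card_lt (C : Ctx α) {s : Set α} (hs : #s < #α) : BddAbove s := by
  by_contra hb
  rw [not_bddAbove_iff'] at hb
  have huniv : (univ : Set α) = ⋃ x : s, Iic (x : α) := by
    ext y
    simp only [mem_univ, true_iff, mem_iUnion]
    obtain ⟨x, hx, hyx⟩ := hb y
    exact ⟨⟨x, hx⟩, le_of_not_ge hyx⟩
  have hcard : #s < #α := hs
  have hlt : #(⋃ x : s, Iic (x : α)) < #α := by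
    rw [Cardinal.card_iUnion_lt_iff_forall_of_isRegular C.reg (by simpa using hcard)]
    exact fun x => card_Iic_lt C _
  rw [← huniv] at hlt
  simp only [Cardinal.mk_univ] at hlt
  exact lt_irrefl _ hlt


lemma exists_isLUB {s : Set α} (hne : s.Nonempty) (hbdd : BddAbove s) : ∃ z, IsLUB s z := by
  obtain ⟨b, hb⟩ := hbdd
  exact ⟨sMin (upperBounds s) ⟨b, hb⟩, sMin_mem _ _, fun x hx => sMin_le _ _ hx⟩

lemma isLUB_of_cofinal {S T : Set α} {z : α} (h : IsLUB S z) (hTS : T ⊆ S)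
    (hcof : ∀ y ∈ S, ∃ v ∈ T, y ≤ v) : IsLUB T z := by
  constructor
  · exact fun v hv => h.1 (hTS hv)
  · intro b hb
    refine h.2 fun y hy => ?_
    obtain ⟨v, hv, hyv⟩ := hcof y hy
    exact le_trans hyv (hb hv)

lemma chain_lub (C : Ctx α) (x : ℕ → α) (hmono : ∀ n, x n < x (n + 1)) :
    ∃ z, IsLUB (range x) z ∧ ∀ n, x n < z := by
  have hbdd : BddAbove (range x) := by
    refine bddAbove_of_card_lt C ?_
    have hct := (Set.countable_range x).to_subtype
    exact lt_of_le_of_lt Cardinal.mk_le_aleph0 C.unc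
  obtain ⟨z, hz⟩ := exists_isLUB ⟨x 0, mem_range_self 0⟩ hbdd
  exact ⟨z, hz, fun n => lt_of_lt_of_le (hmono n) (hz.1 (mem_range_self (n + 1)))⟩

lemma club_univ (C : Ctx α) : IsClubIn (univ : Set α) :=
  ⟨fun _ _ _ _ _ => mem_univ _, fun a => by
    obtain ⟨b, hb⟩ := exists_gt C a; exact ⟨b, mem_univ b, hb⟩⟩

lemma club_Ioi (C : Ctx α) (a : α) : IsClubIn (Ioi a) := by
  constructor
  · intro s hs hne z hz
    obtain ⟨y, hy⟩ := hne
    exact lt_of_lt_of_le (hs hy) (hz.1 hy)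
  · intro b
    obtain ⟨v, hv⟩ := exists_gt C (max a b)
    exact ⟨v, lt_of_le_of_lt (le_max_left a b) hv, lt_of_le_of_lt (le_max_right a b) hv⟩

lemma club_iInter_nat (C : Ctx α) (f : ℕ → Set α) (h : ∀ n, IsClubIn (f n)) :
    IsClubIn (⋂ n, f n) := by
  constructor
  · intro s hs hne z hz
    refine mem_iInter.mpr fun n => (h n).1 s (fun y hy => (mem_iInter.mp (hs hy)) n) hne z hz
  · intro a
    obtain ⟨x0, hx0⟩ := exists_gt C a
    let x : ℕ → α := fun n => Nat.rec x0
      (fun n xn => Classical.choose ((h (Nat.unpair n).1).2 xn)) n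
    have hx_succ : ∀ n, x (n + 1) ∈ f (Nat.unpair n).1 ∧ x n < x (n + 1) := by
      intro n
      obtain ⟨h1, h2⟩ := Classical.choose_spec ((h (Nat.unpair n).1).2 (x n))
      exact ⟨h1, h2⟩
    have hmono : ∀ n, x n < x (n + 1) := fun n => (hx_succ n).2
    have hsm : StrictMono x := strictMono_nat_of_lt_succ hmono
    obtain ⟨z, hzl, hzgt⟩ := chain_lub C x hmono
    refine ⟨z, mem_iInter.mpr fun m => ?_, lt_trans hx0 (hzgt 0)⟩
    set T : Set α := {v | ∃ k, (Nat.unpair k).1 = m ∧ v = x (k + 1)} with hT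
    have hTsub : T ⊆ range x := by rintro v ⟨k, _, rfl⟩; exact ⟨k + 1, rfl⟩
    have hTf : T ⊆ f m := by rintro v ⟨k, hk, rfl⟩; rw [← hk]; exact (hx_succ k).1
    have hTlub : IsLUB T z := by
      refine isLUB_of_cofinal hzl hTsub ?_
      rintro y ⟨j, rfl⟩
      refine ⟨x (Nat.pair m j + 1), ⟨Nat.pair m j, by simp, rfl⟩, ?_⟩
      exact le_of_lt (hsm (Nat.lt_succ_of_le (Nat.right_le_pair m j)))
    exact (h m).1 T hTf ⟨x (Nat.pair m 0 + 1), Nat.pair m 0, by simp, rfl⟩ z hTlub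

lemma club_inter (C : Ctx α) {c d : Set α} (hc : IsClubIn c) (hd : IsClubIn d) :
    IsClubIn (c ∩ d) := by
  have heq : c ∩ d = ⋂ n, (fun n : ℕ => Nat.rec c (fun _ _ => d) n) n := by
    ext x
    simp only [mem_inter_iff, mem_iInter]
    exact ⟨fun ⟨h1, h2⟩ n => by cases n <;> [exact h1; exact h2], fun hx => ⟨hx 0, hx 1⟩⟩
  rw [heq]
  exact club_iInter_nat C _ fun n => by cases n <;> [exact hc; exact hd]

lemma club_diag (C : Ctx α) (f : α → Set α) (h : ∀ i, IsClubIn (f i)) :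
    IsClubIn {k : α | ∀ i < k, k ∈ f i} := by
  constructor
  · intro s hs hne z hz i hiz
    have hne' : {y | y ∈ s ∧ i < y}.Nonempty := by
      by_contra hemp
      have hall : i ∈ upperBounds s := by
        intro y hy
        by_contra hlt
        exact hemp ⟨y, hy, not_le.mp hlt⟩
      exact absurd (hz.2 hall) (not_le.mpr hiz)
    have hsub' : {y | y ∈ s ∧ i < y} ⊆ f i := fun y hy => hs hy.1 i hy.2
    have hlub' : IsLUB {y | y ∈ s ∧ i < y} z := by
      refine isLUB_of_cofinal hz (fun y hy => hy.1) ?_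
      intro y hy
      rcases lt_or_ge i y with h1 | h1
      · exact ⟨y, ⟨hy, h1⟩, le_refl y⟩
      · obtain ⟨v, hv⟩ := hne'
        exact ⟨v, hv, le_trans h1 (le_of_lt hv.2)⟩
    exact (h i).1 _ hsub' hne' z hlub'
  · intro a
    have hne : ∀ b : α, ∀ i : α, {w | w ∈ f i ∧ b < w}.Nonempty := by
      intro b i
      obtain ⟨v, hv1, hv2⟩ := (h i).2 b
      exact ⟨v, hv1, hv2⟩
    set g : α → α → α := fun b i => sMin _ (hne b i) with hg
    have hstep : ∀ b : α, ∃ v, b < v ∧ ∀ i < b, g b i < v := by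
      intro b
      have him : #(g b '' Iio b) < #α := lt_of_le_of_lt (Cardinal.mk_image_le) (C.init b)
      obtain ⟨u, hu⟩ := bddAbove_of_card_lt C him
      obtain ⟨v, hv⟩ := exists_gt C (max u b)
      exact ⟨v, lt_of_le_of_lt (le_max_right u b) hv, fun i hi =>
        lt_of_le_of_lt (le_trans (hu (mem_image_of_mem _ hi)) (le_max_left u b)) hv⟩
    obtain ⟨x0, hx0⟩ := exists_gt C a
    let x : ℕ → α := fun n => Nat.rec x0 (fun _ xn => Classical.choose (hstep xn)) n
    have hx_succ : ∀ n, x n < x (n + 1) ∧ ∀ i < x n, g (x n) i < x (n + 1) := fun n =>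
      Classical.choose_spec (hstep (x n))
    have hmono : ∀ n, x n < x (n + 1) := fun n => (hx_succ n).1
    have hsm : StrictMono x := strictMono_nat_of_lt_succ hmono
    obtain ⟨z, hzl, hzgt⟩ := chain_lub C x hmono
    refine ⟨z, ?_, lt_trans hx0 (hzgt 0)⟩
    intro i hiz
    have hn0 : ∃ n, i < x n := by
      classical
      by_contra hcc
      push_neg at hcc
      have hub : i ∈ upperBounds (range x) := by rintro y ⟨n, rfl⟩; exact hcc n
      exact absurd (hzl.2 hub) (not_le.mpr hiz)
    obtain ⟨n0, hn0⟩ := hn0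
    set T : Set α := {v | ∃ n, n0 ≤ n ∧ v = g (x n) i} with hT
    have hTf : T ⊆ f i := by
      rintro v ⟨n, hn, rfl⟩
      exact (sMin_mem _ (hne (x n) i)).1
    have hTlt : ∀ v ∈ T, v < z := by
      rintro v ⟨n, hn, rfl⟩
      exact lt_of_lt_of_le ((hx_succ n).2 i (lt_of_lt_of_le hn0 (hsm.monotone hn)))
        (hzl.1 (mem_range_self (n + 1)))
    have hTgt : ∀ v ∈ T, ∃ n, n0 ≤ n ∧ x n < v := by
      rintro v ⟨n, hn, rfl⟩
      exact ⟨n, hn, (sMin_mem _ (hne (x n) i)).2⟩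
    have hTlub : IsLUB T z := by
      constructor
      · exact fun v hv => le_of_lt (hTlt v hv)
      · intro b hb
        by_contra hbz
        push_neg at hbz
        have hxb : ∃ n1, b < x n1 := by
          classical
          by_contra hcc
          push_neg at hcc
          have hub : b ∈ upperBounds (range x) := by rintro y ⟨n, rfl⟩; exact hcc n
          exact absurd (hzl.2 hub) (not_le.mpr hbz)
        obtain ⟨n1, hn1⟩ := hxb
        set n := max n0 n1 with hnn
        have hv : g (x n) i ∈ T := ⟨n, le_max_left _ _, rfl⟩
        have : x n < g (x n) i := (sMin_mem _ (hne (x n) i)).2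
        have hbn : b < x n := lt_of_lt_of_le hn1 (hsm.monotone (le_max_right n0 n1))
        exact absurd (hb hv) (not_le.mpr (lt_trans hbn this))
    have hTne : T.Nonempty := ⟨g (x n0) i, n0, le_refl n0, rfl⟩
    exact (h i).1 T hTf hTne z hTlub

def limPts (c : Set α) : Set α :=
  {ξ | (∃ w, w < ξ) ∧ ∀ w < ξ, ∃ v ∈ c, w < v ∧ v < ξ}

lemma club_limPts (C : Ctx α) {c : Set α} (hc : IsClubIn c) : IsClubIn (limPts c) := by
  constructor
  · intro s hs hne z hz
    by_cases hzs : z ∈ s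
    · exact hs hzs
    have hlt : ∀ y ∈ s, y < z := fun y hy => lt_of_le_of_ne (hz.1 hy) (fun h => hzs (h ▸ hy))
    obtain ⟨y0, hy0⟩ := hne
    refine ⟨⟨y0, hlt _ hy0⟩, fun w hw => ?_⟩
    have : ∃ y ∈ s, w < y := by
      by_contra hcon
      push_neg at hcon
      have hub : w ∈ upperBounds s := fun y hy => hcon y hy
      exact absurd (hz.2 hub) (not_le.mpr hw)
    obtain ⟨y, hy, hwy⟩ := this
    obtain ⟨v, hv, hv1, hv2⟩ := (hs hy).2 w hwy
    exact ⟨v, hv, hv1, lt_trans hv2 (hlt y hy)⟩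
  · intro a
    obtain ⟨x0, hx01, hx02⟩ := hc.2 a
    let x : ℕ → α := fun n => Nat.rec x0 (fun _ xn => Classical.choose (hc.2 xn)) n
    have hx_succ : ∀ n, x (n + 1) ∈ c ∧ x n < x (n + 1) := fun n =>
      Classical.choose_spec (hc.2 (x n))
    have hmono : ∀ n, x n < x (n + 1) := fun n => (hx_succ n).2
    obtain ⟨z, hzl, hzgt⟩ := chain_lub C x hmono
    refine ⟨z, ⟨⟨x 0, hzgt 0⟩, fun w hw => ?_⟩, lt_trans hx02 (hzgt 0)⟩
    have : ∃ n, w < x n := by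
      by_contra hcon
      push_neg at hcon
      have hub : w ∈ upperBounds (range x) := by rintro y ⟨n, rfl⟩; exact hcon n
      exact absurd (hzl.2 hub) (not_le.mpr hw)
    obtain ⟨n, hn⟩ := this
    exact ⟨x (n + 1), (hx_succ n).1, lt_trans hn (hmono n), hzgt (n + 1)⟩


variable (U : Ultrafilter α)


lemma not_mem_of_card_lt (hU : IsNormalMeasureOn U) {x : Set α} (hx : #x < #α) : x ∉ U :=
  fun h => absurd (hU.1.1 x h) (ne_of_lt hx)

lemma compl_mem_of_card_lt (hU : IsNormalMeasureOn U) {x : Set α} (hx : #x < #α) : xᶜ ∈ U :=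
  (Ultrafilter.compl_mem_iff_notMem).mpr (not_mem_of_card_lt U hU hx)

lemma exists_gt_of_mem (C : Ctx α) (hU : IsNormalMeasureOn U) {x : Set α} (hx : x ∈ U)
    (a : α) : ∃ b ∈ x, a < b := by
  by_contra h
  push_neg at h
  have hsub : x ⊆ Iic a := fun y hy => h y hy
  exact not_mem_of_card_lt U hU
    (lt_of_le_of_lt (Cardinal.mk_le_mk_of_subset hsub) (card_Iic_lt C a)) hx

lemma inter_nat_mem (C : Ctx α) (hU : IsNormalMeasureOn U) (S : ℕ → Set α)
    (h : ∀ n, S n ∈ U) : (⋂ n, S n) ∈ U := by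
  have hr : #(range S) < #α := by
    have := (Set.countable_range S).to_subtype
    exact lt_of_le_of_lt Cardinal.mk_le_aleph0 C.unc
  have := hU.1.2 (range S) hr (by rintro x ⟨n, rfl⟩; exact h n)
  rwa [Set.sInter_range] at this

lemma inter_Iio_mem (C : Ctx α) (hU : IsNormalMeasureOn U) {i : α} (Y : Iio i → Set α)
    (h : ∀ j, Y j ∈ U) : (⋂ j, Y j) ∈ U := by
  have hr : #(range Y) < #α := by
    have h1 : #(range Y) ≤ #(Iio i) := Cardinal.mk_range_le
    exact lt_of_le_of_lt h1 (C.init i)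
  have := hU.1.2 (range Y) hr (by rintro x ⟨n, rfl⟩; exact h n)
  rwa [Set.sInter_range] at this

lemma fodor (hU : IsNormalMeasureOn U) {X : Set α} (hX : X ∈ U) (f : α → α)
    (hf : ∀ k ∈ X, f k < k) : ∃ γ, {k | k ∈ X ∧ f k = γ} ∈ U := by
  by_contra h
  push_neg at h
  have hcompl : ∀ γ : α, {k | k ∈ X ∧ f k = γ}ᶜ ∈ U := fun γ =>
    (Ultrafilter.compl_mem_iff_notMem).mpr (h γ)
  have hdiag := hU.2 (fun γ => {k | k ∈ X ∧ f k = γ}ᶜ) hcompl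
  have hmem := U.toFilter.inter_mem hdiag hX
  obtain ⟨k, hk1, hk2⟩ := Ultrafilter.nonempty_of_mem hmem
  exact (hk1 (f k) (hf k hk2)) ⟨hk2, rfl⟩

lemma club_mem (C : Ctx α) (hU : IsNormalMeasureOn U) {c : Set α} (hc : IsClubIn c) :
    c ∈ U := by
  by_contra hcm
  have hcc : cᶜ ∈ U := (Ultrafilter.compl_mem_iff_notMem).mpr hcm
  have hnea : Nonempty α := Cardinal.mk_ne_zero_iff.mp
    (ne_of_gt (lt_of_lt_of_le Cardinal.aleph0_pos C.unc.le))
  obtain ⟨a0⟩ := hnea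
  obtain ⟨m, hm, _⟩ := hc.2 a0
  have hX : (cᶜ ∩ {k | m < k}) ∈ U := by
    refine U.toFilter.inter_mem hcc ?_
    have : {k : α | m < k} = (Iic m)ᶜ := by ext k; simp [not_le]
    rw [this]
    exact compl_mem_of_card_lt U hU (card_Iic_lt C m)
  -- define f k := lub of c ∩ Iio k
  have hlub : ∀ k ∈ cᶜ ∩ {k | m < k}, ∃ z, IsLUB (c ∩ Iio k) z := by
    intro k hk
    refine exists_isLUB ⟨m, hm, hk.2⟩ ⟨k, fun y hy => le_of_lt hy.2⟩
  classical
  set f : α → α := fun k =>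
    if h : k ∈ cᶜ ∩ {k | m < k} then Classical.choose (hlub k h) else m with hfdef
  have hreg : ∀ k ∈ cᶜ ∩ {k | m < k}, f k < k := by
    intro k hk
    have hspec : IsLUB (c ∩ Iio k) (f k) := by
      rw [hfdef]; simp only [hk, dif_pos]; exact Classical.choose_spec (hlub k hk)
    have hle : f k ≤ k := hspec.2 fun y hy => le_of_lt hy.2
    rcases lt_or_eq_of_le hle with h1 | h1
    · exact h1
    · exfalso
      have hkl : IsLUB (c ∩ Iio k) k :=
        ⟨fun y hy => le_of_le_of_eq (hspec.1 hy) h1,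
         fun b hb => le_of_eq_of_le h1.symm (hspec.2 hb)⟩
      exact hk.1 (hc.1 (c ∩ Iio k) (fun y hy => hy.1) ⟨m, hm, hk.2⟩ k hkl)
  obtain ⟨γ, hγ⟩ := fodor U hU hX f hreg
  obtain ⟨x, hx, hγx⟩ := hc.2 γ
  obtain ⟨k, hk⟩ : ∃ k, k ∈ {k | k ∈ cᶜ ∩ {k | m < k} ∧ f k = γ} ∩ {j | x < j} := by
    refine Ultrafilter.nonempty_of_mem (U.toFilter.inter_mem hγ ?_)
    have : {j : α | x < j} = (Iic x)ᶜ := by ext j; simp [not_le]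
    rw [this]
    exact compl_mem_of_card_lt U hU (card_Iic_lt C x)
  obtain ⟨⟨hk1, hk2⟩, hk3⟩ := hk
  have hspec : IsLUB (c ∩ Iio k) (f k) := by
    rw [hfdef]; simp only [hk1, dif_pos]; exact Classical.choose_spec (hlub k hk1)
  have : x ≤ f k := hspec.1 ⟨hx, hk3⟩
  rw [hk2] at this
  exact absurd hγx (not_lt.mpr this)


lemma clubFilter_mem (C : Ctx α) (hU : IsNormalMeasureOn U) {c : Set α}
    (hc : c ∈ ClubFilterSets α) : c ∈ U := by
  obtain ⟨c', hc', hsub⟩ := hc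
  exact U.toFilter.mem_of_superset (club_mem U C hU hc') hsub

lemma stat_of_mem (C : Ctx α) (hU : IsNormalMeasureOn U) {x : Set α} (hx : x ∈ U) :
    IsStatIn x := fun c hc =>
  Ultrafilter.nonempty_of_mem (U.toFilter.inter_mem hx (club_mem U C hU hc))

lemma RegT_mem' : True := trivial

def Lset (i : α) : Set α :=
  {k | i < k ∧ ∃ A : Set α, A.Nonempty ∧ A ⊆ Iio k ∧ #A ≤ #(Iio i) ∧ IsLUB A k}

def RegS : Set α := {k | ∀ i < k, k ∉ Lset i}

lemma Lset_not_mem (C : Ctx α) (hU : IsNormalMeasureOn U) (i : α) : Lset i ∉ U := by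
  intro hL
  classical
  have key : ∀ k, k ∈ Lset i → ∃ h : Iio i → α, (∀ j, h j < k) ∧ IsLUB (range h) k := by
    intro k hk
    obtain ⟨hik, A, hne, hsub, hcard, hlub⟩ := hk
    obtain ⟨e⟩ := Cardinal.le_def _ _ |>.mp hcard
    obtain ⟨a0, ha0⟩ := hne
    have hnea : Nonempty A := ⟨⟨a0, ha0⟩⟩
    set h : Iio i → α := fun j => ((Function.invFun (⇑e) j : A) : α) with hhdef
    have hmemA : ∀ j, h j ∈ A := fun j => (Function.invFun (⇑e) j).2
    have hrange : range h = A := by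
      apply Set.eq_of_subset_of_subset
      · rintro z ⟨j, rfl⟩; exact hmemA j
      · intro z hz
        refine ⟨e ⟨z, hz⟩, ?_⟩
        rw [hhdef]
        simp only
        rw [Function.leftInverse_invFun e.injective ⟨z, hz⟩]
    refine ⟨h, fun j => hsub (hmemA j), ?_⟩
    rw [hrange]
    exact hlub
  choose! hfun hreg hlub using key
  have hfod : ∀ j : Iio i, ∃ γ, {k | k ∈ Lset i ∧ hfun k j = γ} ∈ U := by
    intro j
    exact fodor U hU hL (fun k => hfun k j) (fun k hk => hreg k hk j)
  choose γ hY using hfod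
  have hZ : (Lset i ∩ ⋂ j : Iio i, {k | k ∈ Lset i ∧ hfun k j = γ j}) ∈ U :=
    U.toFilter.inter_mem hL (inter_Iio_mem U C hU _ hY)
  obtain ⟨k1, hk1⟩ := Ultrafilter.nonempty_of_mem hZ
  obtain ⟨k2, hk2, hlt⟩ := exists_gt_of_mem U C hU hZ k1
  have hrange_eq : ∀ k, k ∈ (Lset i ∩ ⋂ j : Iio i, {k | k ∈ Lset i ∧ hfun k j = γ j}) →
      range (hfun k) = range γ := by
    intro k hk
    have := hk.2
    rw [mem_iInter] at this
    have hval : ∀ j : Iio i, hfun k j = γ j := fun j => (this j).2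
    apply Set.eq_of_subset_of_subset
    · rintro z ⟨j, rfl⟩; exact ⟨j, (hval j).symm⟩
    · rintro z ⟨j, rfl⟩; exact ⟨j, hval j⟩
  have hl1 : IsLUB (range γ) k1 := by
    rw [← hrange_eq k1 hk1]; exact hlub k1 hk1.1
  have hl2 : IsLUB (range γ) k2 := by
    rw [← hrange_eq k2 hk2]; exact hlub k2 hk2.1
  exact absurd (hl1.unique hl2) (ne_of_lt hlt)

lemma RegS_mem (C : Ctx α) (hU : IsNormalMeasureOn U) : (RegS : Set α) ∈ U := by
  have := hU.2 (fun i => (Lset i)ᶜ) (fun i =>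
    (Ultrafilter.compl_mem_iff_notMem).mpr (Lset_not_mem U C hU i))
  exact this

lemma exists_infinite_Iio (C : Ctx α) : {x : α | ℵ₀ ≤ #(Iio x)}.Nonempty := by
  by_contra h
  have h' : ∀ x : α, #(Iio x) < ℵ₀ := by
    intro x
    by_contra hx
    exact h ⟨x, not_lt.mp hx⟩
  have hfin : ∀ x : α, (Iio x).Finite := by
    intro x
    have := h' x
    rw [Cardinal.lt_aleph0_iff_finite] at this
    exact Set.finite_coe_iff.mp this
  have hsm : StrictMono (fun x : α => (Iio x).ncard) := by
    intro x y hxy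
    refine Set.ncard_lt_ncard ?_ (hfin y)
    constructor
    · exact fun z hz => lt_trans hz hxy
    · intro hsub
      exact lt_irrefl x (hsub hxy)
  have hcnt : Countable α := by
    have : Function.Injective (fun x : α => (Iio x).ncard) := hsm.injective
    exact ⟨⟨_, this⟩⟩
  exact absurd (Cardinal.mk_le_aleph0) (not_le.mpr C.unc)


noncomputable def i0 (C : Ctx α) : α := sMin {x : α | ℵ₀ ≤ #(Iio x)} (exists_infinite_Iio C)

def RegT (C : Ctx α) : Set α := {k | k ∈ RegS ∧ i0 C < k}

lemma i0_spec (C : Ctx α) : ℵ₀ ≤ #(Iio (i0 C)) := sMin_mem _ (exists_infinite_Iio C)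

lemma RegT_mem (C : Ctx α) (hU : IsNormalMeasureOn U) : RegT C ∈ U := by
  have h1 : {k : α | i0 C < k} ∈ U := by
    have : {k : α | i0 C < k} = (Iic (i0 C))ᶜ := by ext k; simp [not_le]
    rw [this]
    exact compl_mem_of_card_lt U hU (card_Iic_lt C _)
  exact U.toFilter.inter_mem (RegS_mem U C hU) h1

lemma ctblLub (C : Ctx α) {k : α} (hk : k ∈ RegT C) {s : Set α} (hs : s ⊆ Iio k)
    (hne : s.Nonempty) (hct : s.Countable) : ∃ z, IsLUB s z ∧ z < k := by
  obtain ⟨z, hz⟩ := exists_isLUB hne ⟨k, fun y hy => le_of_lt (hs hy)⟩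
  refine ⟨z, hz, ?_⟩
  rcases lt_or_eq_of_le (hz.2 (fun y hy => le_of_lt (hs hy)) : z ≤ k) with h1 | h1
  · exact h1
  · exfalso
    have hcard : #s ≤ #(Iio (i0 C)) := by
      have h2 : #s ≤ ℵ₀ := by
        have := hct.to_subtype
        exact Cardinal.mk_le_aleph0
      exact le_trans h2 (i0_spec C)
    exact hk.1 (i0 C) hk.2 ⟨hk.2, s, hne, hs, hcard, h1 ▸ hz⟩

def LocClub (a : α) (c : Set α) : Prop :=
  c ⊆ Iio a ∧ (∀ w < a, ∃ v ∈ c, w < v) ∧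
    ∀ s ⊆ c, s.Nonempty → ∀ z, IsLUB s z → z < a → z ∈ c

def LocStat (a : α) (X : Set α) : Prop := ∀ c, LocClub a c → (X ∩ c).Nonempty

/-- Interleave two sets cofinal below a "regular" point: produce a common limit point. -/
lemma alternate_lub (C : Ctx α) {a : α} (hk : a ∈ RegT C) {A B : Set α}
    (hA : ∀ w < a, ∃ v ∈ A, w < v ∧ v < a) (hB : ∀ w < a, ∃ v ∈ B, w < v ∧ v < a)
    {w : α} (hw : w < a) :
    ∃ z, w < z ∧ z < a ∧
      (∃ s ⊆ A, s.Nonempty ∧ (∀ v ∈ s, v < z) ∧ IsLUB s z) ∧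
      (∃ s ⊆ B, s.Nonempty ∧ (∀ v ∈ s, v < z) ∧ IsLUB s z) := by
  classical
  -- build an increasing chain x : ℕ → {v // v ∈ A ∧ w < v ∧ v < a} with B-witnesses between
  have step : ∀ v : α, v < a → ∃ p : α × α,
      (p.1 ∈ B ∧ v < p.1 ∧ p.1 < a) ∧ (p.2 ∈ A ∧ p.1 < p.2 ∧ p.2 < a) := by
    intro v hv
    obtain ⟨b, hbB, hvb, hba⟩ := hB v hv
    obtain ⟨a', ha'A, hba', ha'a⟩ := hA b hba
    exact ⟨(b, a'), ⟨hbB, hvb, hba⟩, ⟨ha'A, hba', ha'a⟩⟩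
  obtain ⟨x0, hx0A, hwx0, hx0a⟩ := hA w hw
  let T := {v : α // v ∈ A ∧ w < v ∧ v < a}
  let nxt : T → T := fun v =>
    ⟨(Classical.choose (step v.1 v.2.2.2)).2,
      (Classical.choose_spec (step v.1 v.2.2.2)).2.1,
      lt_trans v.2.2.1 (lt_trans (Classical.choose_spec (step v.1 v.2.2.2)).1.2.1
        (Classical.choose_spec (step v.1 v.2.2.2)).2.2.1),
      (Classical.choose_spec (step v.1 v.2.2.2)).2.2.2⟩
  let x : ℕ → T := fun n => Nat.rec ⟨x0, hx0A, hwx0, hx0a⟩ (fun _ xn => nxt xn) n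
  let b : ℕ → α := fun n => (Classical.choose (step (x n).1 (x n).2.2.2)).1
  have hb_spec : ∀ n, b n ∈ B ∧ (x n).1 < b n ∧ b n < (x (n+1)).1 := by
    intro n
    have h1 := (Classical.choose_spec (step (x n).1 (x n).2.2.2)).1
    have h2 := (Classical.choose_spec (step (x n).1 (x n).2.2.2)).2
    exact ⟨h1.1, h1.2.1, h2.2.1⟩
  have hmono : ∀ n, (x n).1 < (x (n+1)).1 := fun n =>
    lt_trans (hb_spec n).2.1 (hb_spec n).2.2
  have hsm : StrictMono (fun n => (x n).1) := strictMono_nat_of_lt_succ hmono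
  -- lub
  obtain ⟨z, hzl, hza⟩ := ctblLub C hk (s := range (fun n => (x n).1))
    (by rintro y ⟨n, rfl⟩; exact (x n).2.2.2) ⟨(x 0).1, ⟨0, rfl⟩⟩ (countable_range _)
  have hxlt : ∀ n, (x n).1 < z := fun n =>
    lt_of_lt_of_le (hmono n) (hzl.1 ⟨n + 1, rfl⟩)
  have hblt : ∀ n, b n < z := fun n => lt_of_lt_of_le (hb_spec n).2.2 (hzl.1 ⟨n + 1, rfl⟩)
  refine ⟨z, lt_trans hwx0 (hxlt 0), hza, ?_, ?_⟩
  · refine ⟨range (fun n => (x n).1), by rintro y ⟨n, rfl⟩; exact (x n).2.1,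
      ⟨(x 0).1, ⟨0, rfl⟩⟩, by rintro y ⟨n, rfl⟩; exact hxlt n, hzl⟩
  · refine ⟨range b, by rintro y ⟨n, rfl⟩; exact (hb_spec n).1,
      ⟨b 0, ⟨0, rfl⟩⟩, by rintro y ⟨n, rfl⟩; exact hblt n, ?_⟩
    constructor
    · rintro y ⟨n, rfl⟩; exact le_of_lt (hblt n)
    · intro u hu
      refine hzl.2 ?_
      rintro y ⟨n, rfl⟩
      exact le_trans (le_of_lt (hb_spec n).2.1) (hu ⟨n, rfl⟩)


lemma locClub_of_limPts {c : Set α} (hc : IsClubIn c) {a : α} (ha : a ∈ limPts c) :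
    LocClub a (c ∩ Iio a) := by
  refine ⟨fun y hy => hy.2, fun w hw => ?_, fun s hs hne z hz hza => ?_⟩
  · obtain ⟨v, hv, hwv, hva⟩ := ha.2 w hw
    exact ⟨v, ⟨hv, hva⟩, hwv⟩
  · exact ⟨hc.1 s (fun y hy => (hs hy).1) hne z hz, hza⟩

lemma locClub_inter {a : α} {c d : Set α} (hc : LocClub a c) (hd : LocClub a d)
    (C : Ctx α) (hk : a ∈ RegT C) : LocClub a (c ∩ d) := by
  refine ⟨fun y hy => hc.1 hy.1, fun w hw => ?_, fun s hs hne z hz hza => ?_⟩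
  · obtain ⟨z, hwz, hza, ⟨sA, hsA, hsAne, hsAlt, hsAl⟩, ⟨sB, hsB, hsBne, hsBlt, hsBl⟩⟩ :=
      alternate_lub C hk (A := c) (B := d)
        (fun w hw => by obtain ⟨v, hv, hwv⟩ := hc.2.1 w hw; exact ⟨v, hv, hwv, hc.1 hv⟩)
        (fun w hw => by obtain ⟨v, hv, hwv⟩ := hd.2.1 w hw; exact ⟨v, hv, hwv, hd.1 hv⟩) hw
    exact ⟨z, ⟨hc.2.2 sA hsA hsAne z hsAl hza, hd.2.2 sB hsB hsBne z hsBl hza⟩, hwz⟩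
  · exact ⟨hc.2.2 s (fun y hy => (hs hy).1) hne z hz hza,
      hd.2.2 s (fun y hy => (hs hy).2) hne z hz hza⟩

lemma locStat_inter_club (C : Ctx α) {a : α} (hk : a ∈ RegT C) {X : Set α}
    (hX : LocStat a X) {c : Set α} (hc : IsClubIn c) (hac : a ∈ limPts c) :
    LocStat a (X ∩ c) := by
  intro e he
  obtain ⟨y, hy1, hy2⟩ := hX _ (locClub_inter (locClub_of_limPts hc hac) he C hk)
  exact ⟨y, ⟨hy1, hy2.1.1⟩, hy2.2⟩

noncomputable def locEnum (c : Set α) : α → α :=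
  (IsWellFounded.wf (r := ((· < ·) : α → α → Prop))).fix
    (fun η ih =>
      @dite _ ((c \ {z | ∃ η', ∃ h' : η' < η, ih η' h' = z}).Nonempty)
        (Classical.propDecidable _) (fun h => sMin _ h) (fun _ => η))

lemma locEnum_eq (c : Set α) (η : α) :
    locEnum c η =
      @dite _ ((c \ {z | ∃ η', ∃ _ : η' < η, locEnum c η' = z}).Nonempty)
        (Classical.propDecidable _) (fun h => sMin _ h) (fun _ => η) := by
  rw [locEnum, WellFounded.fix_eq]

lemma locEnum_props (C : Ctx α) {a : α} {c : Set α} (hcl : LocClub a c) (hk : a ∈ RegT C) :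
    ∀ η < a, ((c \ {z | ∃ η', ∃ _ : η' < η, locEnum c η' = z}).Nonempty ∧ locEnum c η ∈ c ∧
      (∀ η' < η, locEnum c η' < locEnum c η)) := by
  intro η hηa
  have hne : (c \ {z | ∃ η', ∃ _ : η' < η, locEnum c η' = z}).Nonempty := by
    by_contra hemp
    rw [Set.not_nonempty_iff_eq_empty, Set.diff_eq_empty] at hemp
    -- c ⊆ image of Iio η under locEnum; so #c ≤ #(Iio η), and c is cofinal with lub a
    have hcard : #c ≤ #(Iio η) := by
      have h1 : c ⊆ (fun η' => locEnum c η') '' (Iio η) := by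
        intro z hz
        obtain ⟨η', hη', heq⟩ := hemp hz
        exact ⟨η', hη', heq⟩
      exact le_trans (Cardinal.mk_le_mk_of_subset h1) Cardinal.mk_image_le
    have hcne : c.Nonempty := by
      obtain ⟨v, hv, _⟩ := hcl.2.1 (i0 C) hk.2
      exact ⟨v, hv⟩
    have hlub : IsLUB c a := by
      constructor
      · exact fun y hy => le_of_lt (hcl.1 hy)
      · intro u hu
        by_contra huc
        push_neg at huc
        obtain ⟨v, hv, huv⟩ := hcl.2.1 u huc
        exact absurd (hu hv) (not_le.mpr huv)
    exact hk.1 η hηa ⟨hηa, c, hcne, fun y hy => hcl.1 hy, hcard, hlub⟩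
  have hval : locEnum c η = sMin _ hne := by
    rw [locEnum_eq]
    simp only [hne, dif_pos]
  have hmem : locEnum c η ∈ c := by rw [hval]; exact (sMin_mem _ hne).1
  refine ⟨hne, hmem, ?_⟩
  intro η' hη'
  have hη'a : η' < a := lt_trans hη' hηa
  have hne' : (c \ {z | ∃ η'', ∃ _ : η'' < η', locEnum c η'' = z}).Nonempty := by
    obtain ⟨v, hv1, hv2⟩ := hne
    refine ⟨v, hv1, ?_⟩
    intro ⟨η'', hη'', heq⟩
    exact hv2 ⟨η'', lt_trans hη'' hη', heq⟩
  have hval' : locEnum c η' = sMin _ hne' := by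
    rw [locEnum_eq]
    simp only [hne', dif_pos]
  have hsub : (c \ {z | ∃ η'', ∃ _ : η'' < η, locEnum c η'' = z}) ⊆
      (c \ {z | ∃ η'', ∃ _ : η'' < η', locEnum c η'' = z}) := by
    intro z hz
    refine ⟨hz.1, ?_⟩
    intro ⟨η'', hη'', heq⟩
    exact hz.2 ⟨η'', lt_trans hη'' hη', heq⟩
  have hle : locEnum c η' ≤ locEnum c η := by
    rw [hval, hval']
    exact sMin_le _ hne' (hsub (sMin_mem _ hne))
  have hne'' : locEnum c η' ≠ locEnum c η := by
    intro heq
    have := (sMin_mem _ hne).2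
    rw [← hval] at this
    exact this ⟨η', hη', heq⟩
  exact lt_of_le_of_ne hle hne''

lemma locEnum_ge (C : Ctx α) {a : α} {c : Set α} (hcl : LocClub a c) (hk : a ∈ RegT C) :
    ∀ η < a, η ≤ locEnum c η := by
  intro η
  induction η using WellFoundedLT.induction with
  | ind η IH =>
    intro hηa
    by_contra hlt
    push_neg at hlt
    set η' := locEnum c η with hη'
    have hη'η : η' < η := hlt
    have h1 : locEnum c η' < locEnum c η := (locEnum_props C hcl hk η hηa).2.2 η' hη'η
    have h2 : η' ≤ locEnum c η' := IH η' hη'η (lt_trans hη'η hηa)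
    rw [← hη'] at h1
    exact absurd h2 (not_le.mpr h1)

lemma locEnum_closure (C : Ctx α) {a : α} {c : Set α} (hcl : LocClub a c) (hk : a ∈ RegT C)
    {ξ : α} (hξa : ξ < a) (hlim1 : ∃ w, w < ξ) (hlim2 : ∀ w < ξ, ∃ v, w < v ∧ v < ξ)
    (hdom : ∀ η < ξ, locEnum c η < ξ) : ξ ∈ c := by
  set s : Set α := {z | ∃ η, η < ξ ∧ locEnum c η = z} with hs
  have hsc : s ⊆ c := by
    rintro z ⟨η, hη, rfl⟩
    exact (locEnum_props C hcl hk η (lt_trans hη hξa)).2.1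
  have hsne : s.Nonempty := by
    obtain ⟨w, hw⟩ := hlim1
    exact ⟨locEnum c w, w, hw, rfl⟩
  have hslub : IsLUB s ξ := by
    constructor
    · rintro z ⟨η, hη, rfl⟩
      exact le_of_lt (hdom η hη)
    · intro u hu
      by_contra huξ
      push_neg at huξ
      obtain ⟨v, huv, hvξ⟩ := hlim2 u huξ
      have h1 : v ≤ locEnum c v := locEnum_ge C hcl hk v (lt_trans hvξ hξa)
      have h2 : locEnum c v ≤ u := hu ⟨v, hvξ, rfl⟩
      exact absurd (le_trans h1 h2) (not_le.mpr huv)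
  exact hcl.2.2 s hsc hsne ξ hslub hξa


lemma not_stat_iff (x : Set α) : ¬ IsStatIn x ↔ ∃ c, IsClubIn c ∧ x ∩ c = ∅ := by
  unfold IsStatIn
  push_neg
  simp [Set.not_nonempty_iff_eq_empty]

lemma tail_mem (C : Ctx α) (hU : IsNormalMeasureOn U) (a : α) : {k : α | a < k} ∈ U := by
  have : {k : α | a < k} = (Iic a)ᶜ := by ext k; simp [not_le]
  rw [this]
  exact compl_mem_of_card_lt U hU (card_Iic_lt C a)

lemma K1 (C : Ctx α) (hU : IsNormalMeasureOn U) {d : Set α} (hd : d ∈ U)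
    (Hd : ∀ S, S ⊆ d → IsStatIn S → S ∈ U) {W : Set α} (hWd : W ⊆ d) (hWs : IsStatIn W) :
    ∃ c, IsClubIn c ∧ ∀ a ∈ W ∩ c, a ∈ RegT C → LocStat a (W ∩ Iio a) := by
  classical
  set W₁ : Set α := {a | a ∈ W ∧ a ∈ RegT C ∧ ¬ LocStat a (W ∩ Iio a)} with hW₁def
  suffices hns : ¬ IsStatIn W₁ by
    obtain ⟨c, hc, hcempty⟩ := (not_stat_iff _).mp hns
    refine ⟨c, hc, ?_⟩
    rintro a ⟨haW, hac⟩ haR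
    by_contra hloc
    have : a ∈ W₁ ∩ c := ⟨⟨haW, haR, hloc⟩, hac⟩
    rw [hcempty] at this
    exact this
  intro hW1s
  have hW1U : W₁ ∈ U := Hd W₁ (fun a ha => hWd ha.1) hW1s
  have hch : ∀ a, a ∈ W₁ → ∃ cᵥ, LocClub a cᵥ ∧ (W ∩ Iio a) ∩ cᵥ = ∅ := by
    intro a ha
    have h1 := ha.2.2
    unfold LocStat at h1
    push_neg at h1
    obtain ⟨cᵥ, h2, h3⟩ := h1
    exact ⟨cᵥ, h2, h3⟩
  choose! ct hct1 hct2 using hch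
  set Bs : α → α → Set α := fun η β => {a | a ∈ W₁ ∧ η < a ∧ β ≤ locEnum (ct a) η} with hBsdef
  by_cases hcase : ∃ η, ∀ β, IsStatIn (Bs η β)
  · obtain ⟨η, hη⟩ := hcase
    have hX : (W₁ ∩ {a | η < a}) ∈ U := U.toFilter.inter_mem hW1U (tail_mem U C hU η)
    have hregr : ∀ a ∈ W₁ ∩ {a | η < a}, locEnum (ct a) η < a := by
      intro a ha
      have hmem : locEnum (ct a) η ∈ ct a :=
        (locEnum_props (C := C) (hct1 a ha.1) ha.1.2.1 η ha.2).2.1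
      exact (hct1 a ha.1).1 hmem
    obtain ⟨γ, hγ⟩ := fodor U hU hX _ hregr
    obtain ⟨β₀, hβ₀⟩ := exists_gt C γ
    have hBU : Bs η β₀ ∈ U := Hd _ (fun a ha => hWd ha.1.1) (hη β₀)
    obtain ⟨k, hk1, hk2⟩ := Ultrafilter.nonempty_of_mem (U.toFilter.inter_mem hBU hγ)
    have hle : β₀ ≤ locEnum (ct k) η := hk1.2.2
    rw [hk2.2] at hle
    exact absurd hle (not_le.mpr hβ₀)
  · push_neg at hcase
    choose bβ hbβ using hcase
    have hbβ' : ∀ η, ∃ c, IsClubIn c ∧ Bs η (bβ η) ∩ c = ∅ := fun η =>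
      (not_stat_iff _).mp (hbβ η)
    choose bC hbC1 hbC2 using hbβ'
    set D : Set α := limPts (univ : Set α) ∩ {k | ∀ η < k, k ∈ Ioi (bβ η)} with hDdef
    have hDclub : IsClubIn D :=
      club_inter C (club_limPts C (club_univ C)) (club_diag C _ (fun η => club_Ioi C (bβ η)))
    set E : Set α := {k | ∀ η < k, k ∈ bC η} with hEdef
    have hEclub : IsClubIn E := club_diag C bC hbC1
    have hWD : W ∩ D = ∅ := by
      by_contra hne
      obtain ⟨x, hxW, hxD⟩ := Set.nonempty_iff_ne_empty.mpr hne
      obtain ⟨astar, hastar, hasE, hasx⟩ :=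
        hW1s (E ∩ Ioi x) (club_inter C hEclub (club_Ioi C x))
      have hasR : astar ∈ RegT C := hastar.2.1
      have hxa : x < astar := hasx
      have hxct : x ∈ ct astar := by
        refine locEnum_closure (C := C) (hct1 astar hastar) hasR hxa hxD.1.1 ?_ ?_
        · intro w hw
          obtain ⟨v, _, hv2, hv3⟩ := hxD.1.2 w hw
          exact ⟨v, hv2, hv3⟩
        · intro η hηx
          have hηa : η < astar := lt_trans hηx hxa
          have hnotB : astar ∉ Bs η (bβ η) := by
            intro hmem
            have hmm : astar ∈ Bs η (bβ η) ∩ bC η := ⟨hmem, hasE η hηa⟩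
            rw [hbC2 η] at hmm
            exact hmm
          have h1 : locEnum (ct astar) η < bβ η := by
            by_contra hge
            exact hnotB ⟨hastar, hηa, not_lt.mp hge⟩
          exact lt_trans h1 (hxD.2 η hηx)
      have hfin : x ∈ (W ∩ Iio astar) ∩ ct astar := ⟨⟨hxW, hxa⟩, hxct⟩
      rw [hct2 astar hastar] at hfin
      exact hfin
    obtain ⟨y, hy⟩ := hWs D hDclub
    rw [hWD] at hy
    exact hy

lemma K2 (C : Ctx α) (hU : IsNormalMeasureOn U) {d : Set α} (hd : d ∈ U)
    (Hd : ∀ S, S ⊆ d → IsStatIn S → S ∈ U) : False := by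
  classical
  have hK1 := fun (W : Set α) (h1 : W ⊆ d) (h2 : IsStatIn W) => K1 U C hU hd Hd h1 h2
  set cl : Set α → Set α := fun W =>
    if h : W ⊆ d ∧ IsStatIn W then Classical.choose (hK1 W h.1 h.2) else univ with hcldef
  have hcl : ∀ W, W ⊆ d → IsStatIn W →
      IsClubIn (cl W) ∧ ∀ a ∈ W ∩ cl W, a ∈ RegT C → LocStat a (W ∩ Iio a) := by
    intro W h1 h2
    have hW : W ⊆ d ∧ IsStatIn W := ⟨h1, h2⟩
    have : cl W = Classical.choose (hK1 W h1 h2) := by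
      exact dif_pos hW
    rw [this]
    exact Classical.choose_spec (hK1 W h1 h2)
  set S : ℕ → Set α := fun n => Nat.rec (d ∩ RegT C) (fun _ Sn => Sn ∩ cl Sn) n with hSdef
  have hSsucc : ∀ n, S (n + 1) = S n ∩ cl (S n) := fun n => rfl
  have hS0 : S 0 = d ∩ RegT C := rfl
  have hSU : ∀ n, S n ∈ U ∧ S n ⊆ d := by
    intro n
    induction n with
    | zero => exact ⟨U.toFilter.inter_mem hd (RegT_mem U C hU),
        fun a ha => ha.1⟩
    | succ n ih =>
      have hstat : IsStatIn (S n) := stat_of_mem U C hU ih.1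
      have hclub := (hcl (S n) ih.2 hstat).1
      rw [hSsucc n]
      exact ⟨U.toFilter.inter_mem ih.1 (club_mem U C hU hclub),
        fun a ha => ih.2 ha.1⟩
  have hSR : ∀ n, S n ⊆ RegT C := by
    intro n
    induction n with
    | zero => exact fun a ha => ha.2
    | succ n ih => rw [hSsucc n]; exact fun a ha => ih ha.1
  have hclub : ∀ n, IsClubIn (cl (S n)) := fun n =>
    (hcl (S n) (hSU n).2 (stat_of_mem U C hU (hSU n).1)).1
  have hprop : ∀ n, ∀ a ∈ S n ∩ cl (S n), a ∈ RegT C → LocStat a (S n ∩ Iio a) := fun n =>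
    (hcl (S n) (hSU n).2 (stat_of_mem U C hU (hSU n).1)).2
  set CC : Set α := ⋂ n, limPts (cl (S n)) with hCCdef
  have hCC : IsClubIn CC := club_iInter_nat C _ (fun n => club_limPts C (hclub n))
  -- the key step
  have hstep : ∀ (n : ℕ) (x : α), x ∈ S (n + 1) → x ∈ CC → x ∈ limPts CC →
      ∃ y, y < x ∧ y ∈ S (n + 2) ∧ y ∈ CC ∧ y ∈ limPts CC := by
    intro n x hxS hxC hxL
    have hxR : x ∈ RegT C := hSR (n + 1) hxS
    have hxs : x ∈ S n ∩ cl (S n) := by rw [← hSsucc n]; exact hxS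
    have h1 : LocStat x (S n ∩ Iio x) := hprop n x hxs hxR
    have hxLn : ∀ m, x ∈ limPts (cl (S m)) := fun m => (mem_iInter.mp hxC) m
    have h2 : LocStat x ((S n ∩ Iio x) ∩ cl (S n)) :=
      locStat_inter_club C hxR h1 (hclub n) (hxLn n)
    have h3 : LocStat x (((S n ∩ Iio x) ∩ cl (S n)) ∩ cl (S (n + 1))) :=
      locStat_inter_club C hxR h2 (hclub (n + 1)) (hxLn (n + 1))
    have he : LocClub x {v | v < x ∧ v ∈ CC ∧ v ∈ limPts CC} := by
      refine ⟨fun y hy => hy.1, ?_, ?_⟩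
      · intro w hw
        have hcof : ∀ w' < x, ∃ v ∈ CC, w' < v ∧ v < x := fun w' hw' => hxL.2 w' hw'
        obtain ⟨z, hwz, hzx, ⟨sA, hsA, hsAne, hsAlt, hsAl⟩, _⟩ :=
          alternate_lub C hxR (A := CC) (B := CC) hcof hcof hw
        have hzCC : z ∈ CC := hCC.1 sA hsA hsAne z hsAl
        have hzlim : z ∈ limPts CC := by
          obtain ⟨v0, hv0⟩ := hsAne
          refine ⟨⟨v0, hsAlt v0 hv0⟩, ?_⟩
          intro w' hw'
          have : ∃ v ∈ sA, w' < v := by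
            by_contra hcon
            push_neg at hcon
            exact absurd (hsAl.2 fun y hy => hcon y hy) (not_le.mpr hw')
          obtain ⟨v, hv1, hv2⟩ := this
          exact ⟨v, hsA hv1, hv2, hsAlt v hv1⟩
        exact ⟨z, ⟨hzx, hzCC, hzlim⟩, hwz⟩
      · intro s hs hne z hz hzx
        by_cases hzs : z ∈ s
        · exact hs hzs
        have hlt : ∀ y ∈ s, y < z := fun y hy =>
          lt_of_le_of_ne (hz.1 hy) (fun h => hzs (h ▸ hy))
        have hzCC : z ∈ CC := hCC.1 s (fun y hy => (hs hy).2.1) hne z hz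
        refine ⟨hzx, hzCC, ?_⟩
        obtain ⟨y0, hy0⟩ := hne
        refine ⟨⟨y0, hlt _ hy0⟩, ?_⟩
        intro w hw
        have : ∃ y ∈ s, w < y := by
          by_contra hcon
          push_neg at hcon
          exact absurd (hz.2 fun y hy => hcon y hy) (not_le.mpr hw)
        obtain ⟨y, hy1, hy2⟩ := this
        obtain ⟨v, hv1, hv2, hv3⟩ := (hs hy1).2.2.2 w hy2
        exact ⟨v, hv1, hv2, lt_trans hv3 (hlt y hy1)⟩
    obtain ⟨y, hy1, hy2⟩ := h3 _ he
    refine ⟨y, hy2.1, ?_, hy2.2.1, hy2.2.2⟩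
    have : S (n + 2) = (S n ∩ cl (S n)) ∩ cl (S (n + 1)) := by
      rw [hSsucc (n + 1), hSsucc n]
    rw [this]
    exact ⟨⟨hy1.1.1.1, hy1.1.2⟩, hy1.2⟩
  -- base point
  have hlims : IsClubIn (CC ∩ limPts CC) := club_inter C hCC (club_limPts C hCC)
  have hGm : ((⋂ n, S n) ∩ (CC ∩ limPts CC)) ∈ U :=
    U.toFilter.inter_mem (inter_nat_mem U C hU S (fun n => (hSU n).1))
      (club_mem U C hU hlims)
  obtain ⟨x0, hx0⟩ := Ultrafilter.nonempty_of_mem hGm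
  -- descending chain
  let T : ℕ → Type _ := fun n => {v : α // v ∈ S (n + 1) ∧ v ∈ CC ∧ v ∈ limPts CC}
  let chain : ∀ n : ℕ, T n := fun n =>
    Nat.rec (motive := T)
      ⟨x0, (mem_iInter.mp hx0.1) 1, hx0.2.1, hx0.2.2⟩
      (fun n xn =>
        ⟨Classical.choose (hstep n xn.1 xn.2.1 xn.2.2.1 xn.2.2.2),
          (Classical.choose_spec (hstep n xn.1 xn.2.1 xn.2.2.1 xn.2.2.2)).2.1,
          (Classical.choose_spec (hstep n xn.1 xn.2.1 xn.2.2.1 xn.2.2.2)).2.2.1,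
          (Classical.choose_spec (hstep n xn.1 xn.2.1 xn.2.2.1 xn.2.2.2)).2.2.2⟩) n
  have hdec : ∀ n, (chain (n + 1)).1 < (chain n).1 := by
    intro n
    exact (Classical.choose_spec (hstep n (chain n).1 (chain n).2.1 (chain n).2.2.1
      (chain n).2.2.2)).1
  -- no infinite descending sequence
  have hne : (range fun n => (chain n).1).Nonempty := ⟨(chain 0).1, 0, rfl⟩
  obtain ⟨n0, hn0⟩ := sMin_mem _ hne
  have h1 := sMin_le _ hne (⟨n0 + 1, rfl⟩ : (chain (n0 + 1)).1 ∈ range fun n => (chain n).1)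
  have hn0' : (chain n0).1 = sMin (range fun n => (chain n).1) hne := hn0
  have h2 := hdec n0
  rw [hn0'] at h2
  exact absurd h1 (not_le.mpr h2)

lemma exists_stat_not_mem (C : Ctx α) (hU : IsNormalMeasureOn U) {e : Set α} (he : e ∈ U) :
    ∃ S, S ⊆ e ∧ IsStatIn S ∧ S ∉ U := by
  by_contra h
  push_neg at h
  exact K2 U C hU he fun S h1 h2 => h S h1 h2

end UNmAux

section MasterSec
open UNmAux

variable {α : Type*} [LinearOrder α] [WellFoundedLT α]

lemma master (C : Ctx α)
    (U : Ultrafilter α) (hU : IsNormalMeasureOn U)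
    (B : Set (Set α)) (hBst : ∀ b ∈ B, IsStatIn b) (hBU : ∀ b ∈ B, b ∈ U)
    (hBcard : #B ≤ #α) : ¬ IsBaseFor (InterClubBase B) U := by
  classical
  intro hbase
  rcases B.eq_empty_or_nonempty with hBe | hBne
  · obtain ⟨y, hy, _⟩ := hbase.2 univ Filter.univ_mem
    obtain ⟨b, hb, _⟩ := hy
    rw [hBe] at hb
    exact hb
  · obtain ⟨b0, hb0⟩ := hBne
    have hneB : Nonempty B := ⟨⟨b0, hb0⟩⟩
    obtain ⟨f⟩ := (Cardinal.le_def _ _).mp hBcard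
    set e : α → Set α := fun i => ((Function.invFun (⇑f) i : B) : Set α) with hedef
    have heB : ∀ i, e i ∈ B := fun i => (Function.invFun (⇑f) i).2
    have hcover : ∀ b ∈ B, ∃ i, e i = b := by
      intro b hb
      refine ⟨f ⟨b, hb⟩, ?_⟩
      rw [hedef]
      simp only
      rw [Function.leftInverse_invFun f.injective ⟨b, hb⟩]
    have hsplit : ∀ i, ∃ S, S ⊆ e i ∧ IsStatIn S ∧ S ∉ U := fun i =>
      exists_stat_not_mem U C hU (hBU _ (heB i))
    choose SS hS1 hS2 hS3 using hsplit
    have hu : {k : α | ∀ i < k, k ∈ (SS i)ᶜ} ∈ U :=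
      hU.2 _ (fun i => (Ultrafilter.compl_mem_iff_notMem).mpr (hS3 i))
    obtain ⟨y, hy, hysub⟩ := hbase.2 _ hu
    obtain ⟨b, hbB, c, hcCl, rfl⟩ := hy
    obtain ⟨j, hej⟩ := hcover b hbB
    obtain ⟨c', hc'club, hc'sub⟩ := hcCl
    obtain ⟨x, hx1, hx2⟩ := hS2 j (c' ∩ Ioi j) (club_inter C hc'club (club_Ioi C j))
    have hxb : x ∈ b := by rw [← hej]; exact hS1 j hx1
    have hxc : x ∈ c := hc'sub hx2.1
    have hxu := hysub ⟨hxb, hxc⟩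
    exact hxu j hx2.2 hx1

end MasterSec

/-- Let `κ` be measurable, `U` a normal measure on `κ` and `B ⊆ U` a family of stationary
sets of size `≤ κ`. Then `{b ∩ c : b ∈ B, c ∈ Cl}` is not a base for `U`; consequently
`u^nm*_κ ≥ κ⁺`. Here `κ` is represented as a well-ordered type `α` of regular uncountable
cardinality all of whose proper initial segments are of size `< #α`. -/
theorem uNmStar_ge_succ {α : Type*} [LinearOrder α] [WellFoundedLT α]
    (hreg : (#α).IsRegular) (hunc : ℵ₀ < #α)
    (hinit : ∀ a : α, #(Set.Iio a) < #α)
    (U : Ultrafilter α) (hU : IsNormalMeasureOn U)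
    (B : Set (Set α)) (hBst : ∀ b ∈ B, IsStatIn b) (hBU : ∀ b ∈ B, b ∈ U)
    (hBcard : #B ≤ #α) :
    ¬ IsBaseFor (InterClubBase B) U ∧ Order.succ (#α) ≤ uNmStar α := by
  have C : UNmAux.Ctx α := ⟨hreg, hunc, hinit⟩
  constructor
  · exact master C U hU B hBst hBU hBcard
  · apply le_csInf
    · refine ⟨#{x : Set α | x ∈ U}, {x | x ∈ U}, ?_, ⟨U, hU, ?_, ?_⟩, rfl⟩
      · exact fun b hb => UNmAux.stat_of_mem U C hU hb
      · rintro y ⟨b, hb, c, hc, rfl⟩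
        exact U.toFilter.inter_mem hb (UNmAux.clubFilter_mem U C hU hc)
      · intro u hu
        refine ⟨u ∩ univ, ⟨u, hu, univ, ⟨univ, UNmAux.club_univ C, subset_rfl⟩, rfl⟩, ?_⟩
        rw [inter_univ]
    · rintro x ⟨B', hstat', ⟨U', hU', hbase'⟩, rfl⟩
      apply Order.succ_le_of_lt
      by_contra hle
      push_neg at hle
      have hBU' : ∀ b ∈ B', b ∈ U' := by
        intro b hb
        have hmem : b ∩ univ ∈ InterClubBase B' :=
          ⟨b, hb, univ, ⟨univ, UNmAux.club_univ C, subset_rfl⟩, rfl⟩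
        have := hbase'.1 _ hmem
        rwa [inter_univ] at this
      exact master C U' hU' B' hstat' hBU' hle hbase'
end

section
/- If κ is an inaccessible cardinal and X is a family of fewer than κ stationary subsets of κ, then there exists a stationary set y ⊆ κ such that for every x ∈ X either y ⊆ x or y ∩ x = ∅. In particular, no family of fewer than κ stationary subsets of κ is a stationary splitting family. -/
open Set Cardinal

/-- `S` is a stationary splitting family: a family of stationary sets such that every
stationary set is stationarily split by some member of `S`. -/
def IsStatSplittingFamily {α : Type*} [LinearOrder α] (S : Set (Set α)) : Prop :=
  (∀ y ∈ S, IsStatIn y) ∧ ∀ x : Set α, IsStatIn x → ∃ y ∈ S, StatSplits y x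

section Aux

universe u

variable {α : Type u} [LinearOrder α] [WellFoundedLT α]

/-- Any subset of size `< #α` is strictly bounded above, when `#α` is regular and all
initial segments are small. -/
lemma aux_bdd (hreg : (#α).IsRegular) (hinit : ∀ a : α, #(Set.Iio a) < #α)
    (S : Set α) (hS : #S < #α) : ∃ b : α, ∀ s ∈ S, s < b := by
  by_contra h
  push_neg at h
  have hcover : (Set.univ : Set α) ⊆ ⋃ s : S, Set.Iic (s : α) := by
    intro a _
    obtain ⟨s, hs, hle⟩ := h a
    exact Set.mem_iUnion.2 ⟨⟨s, hs⟩, hle⟩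
  have h1 : #α ≤ Cardinal.sum fun s : S => #(Set.Iic (s : α)) := by
    calc #α = #(Set.univ : Set α) := (Cardinal.mk_univ).symm
      _ ≤ #(⋃ s : S, Set.Iic (s : α)) := Cardinal.mk_le_mk_of_subset hcover
      _ ≤ _ := Cardinal.mk_iUnion_le_sum_mk
  have h2 : (Cardinal.sum fun s : S => #(Set.Iic (s : α))) < #α := by
    apply Cardinal.sum_lt_of_isRegular hreg hS
    intro s
    have hsub : (Set.Iic (s : α)) ⊆ insert (s : α) (Set.Iio (s : α)) := by
      intro x hx
      rcases lt_or_eq_of_le hx with h' | h'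
      · exact Or.inr h'
      · exact Or.inl h'
    calc #(Set.Iic (s : α)) ≤ #(insert (s : α) (Set.Iio (s : α)) : Set α) :=
          Cardinal.mk_le_mk_of_subset hsub
      _ ≤ #(Set.Iio (s : α)) + 1 := Cardinal.mk_insert_le
      _ < #α := Cardinal.add_lt_of_lt hreg.aleph0_le (hinit s)
          (Cardinal.one_lt_aleph0.trans_le hreg.aleph0_le)
  exact absurd (h1.trans_lt h2) (lt_irrefl _)

/-- In a well-order, every set with an upper bound has a least upper bound. -/
lemma aux_lub (s : Set α) (b : α) (hb : b ∈ upperBounds s) : ∃ a : α, IsLUB s a := by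
  obtain ⟨m, hm, hmin⟩ := WellFounded.has_min wellFounded_lt (upperBounds s) ⟨b, hb⟩
  exact ⟨m, hm, fun x hx => not_lt.1 (hmin x hx)⟩

/-- The intersection of fewer than `#α` clubs is a club. -/
lemma club_iInter_s14 {ι : Type u} (h0 : ℵ₀ < #α) (hreg : (#α).IsRegular)
    (hinit : ∀ a : α, #(Set.Iio a) < #α) (hι : #ι < #α)
    (c : ι → Set α) (hc : ∀ i, IsClubIn (c i)) : IsClubIn (⋂ i, c i) := by
  constructor
  · intro s hs hne a ha
    exact Set.mem_iInter.2 fun i =>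
      (hc i).1 s (hs.trans (Set.iInter_subset _ i)) hne a ha
  · intro a
    have hf : ∀ i (b : α), ∃ x ∈ c i, b < x := fun i b => (hc i).2 b
    choose f hf1 hf2 using hf
    have hB : ∀ b : α, ∃ g : α, b < g ∧ ∀ i, f i b < g := by
      intro b
      have hcard : #(insert b (Set.range fun i => f i b) : Set α) < #α := by
        calc #(insert b (Set.range fun i => f i b) : Set α)
            ≤ #(Set.range fun i => f i b) + 1 := Cardinal.mk_insert_le
          _ ≤ #ι + 1 := by
              gcongr
              exact Cardinal.mk_range_le
          _ < #α := Cardinal.add_lt_of_lt hreg.aleph0_le hι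
              (Cardinal.one_lt_aleph0.trans_le hreg.aleph0_le)
      obtain ⟨g, hg⟩ := aux_bdd hreg hinit _ hcard
      exact ⟨g, hg b (Set.mem_insert _ _),
        fun i => hg (f i b) (Set.mem_insert_of_mem _ ⟨i, rfl⟩)⟩
    choose g hg1 hg2 using hB
    set seq : ℕ → α := fun n => g^[n] a with hseq
    have hsucc : ∀ n, seq (n + 1) = g (seq n) := by
      intro n
      simp [hseq, Function.iterate_succ_apply']
    have hmono : ∀ n, seq n < seq (n + 1) := by
      intro n; rw [hsucc]; exact hg1 _
    have hrange : #(Set.range seq) < #α := by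
      calc #(Set.range seq) ≤ ℵ₀ := (Set.countable_range seq).le_aleph0
        _ < #α := h0
    obtain ⟨b0, hb0⟩ := aux_bdd hreg hinit _ hrange
    obtain ⟨aω, hω⟩ := aux_lub (Set.range seq) b0 fun x hx => (hb0 x hx).le
    have hseqle : ∀ n, seq n ≤ aω := fun n => hω.1 ⟨n, rfl⟩
    refine ⟨aω, ?_, ?_⟩
    · refine Set.mem_iInter.2 fun i => ?_
      have hlub : IsLUB (Set.range fun n => f i (seq n)) aω := by
        constructor
        · rintro x ⟨n, rfl⟩
          have hx : f i (seq n) < seq (n + 1) := by rw [hsucc]; exact hg2 _ i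
          exact hx.le.trans (hseqle (n + 1))
        · intro b hb
          refine hω.2 ?_
          rintro x ⟨n, rfl⟩
          exact (hf2 i (seq n)).le.trans (hb ⟨n, rfl⟩)
      refine (hc i).1 (Set.range fun n => f i (seq n))
        (by rintro x ⟨n, rfl⟩; exact hf1 i (seq n)) ⟨f i (seq 0), ⟨0, rfl⟩⟩ aω hlub
    · calc a = seq 0 := rfl
        _ < seq 1 := hmono 0
        _ ≤ aω := hseqle 1

/-- `univ` is a club. -/
lemma univ_club (hreg : (#α).IsRegular) (hinit : ∀ a : α, #(Set.Iio a) < #α) :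
    IsClubIn (Set.univ : Set α) := by
  refine ⟨fun _ _ _ _ _ => trivial, fun a => ?_⟩
  obtain ⟨b, hb⟩ := aux_bdd hreg hinit {a} (by
    simpa using Cardinal.one_lt_aleph0.trans_le hreg.aleph0_le)
  exact ⟨b, trivial, hb a rfl⟩

end Aux

/-- If `κ` is inaccessible and `X` is a family of fewer than `κ` stationary subsets of `κ`,
then there is a stationary `y` with `y ⊆ x` or `y ∩ x = ∅` for every `x ∈ X`; in particular
`X` is not a stationary splitting family. Here `κ` is represented as a well-ordered type `α`
of inaccessible cardinality all of whose proper initial segments are of size `< #α`. -/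
theorem small_families_do_not_split {α : Type*} [LinearOrder α] [WellFoundedLT α]
    (hinacc : (#α).IsInaccessible)
    (hinit : ∀ a : α, #(Set.Iio a) < #α)
    (X : Set (Set α)) (hXcard : #X < #α) (hXstat : ∀ x ∈ X, IsStatIn x) :
    (∃ y : Set α, IsStatIn y ∧ ∀ x ∈ X, y ⊆ x ∨ y ∩ x = ∅) ∧
    ¬ IsStatSplittingFamily X := by
  obtain ⟨h0, hreg, hsl⟩ := And.intro hinacc.aleph0_lt (And.intro hinacc.isRegular hinacc.isStrongLimit)
  have hna : Nonempty α := Cardinal.mk_ne_zero_iff.1 (Cardinal.aleph0_pos.trans h0).ne'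
  -- the "type" function
  set f : α → Set X := fun a => {x : X | a ∈ (x : Set α)} with hfdef
  have hcard : #(Set X) < #α := by
    rw [Cardinal.mk_set]
    exact hsl.two_power_lt hXcard
  -- some fibre of f is stationary
  have hex : ∃ t : Set X, IsStatIn (f ⁻¹' {t}) := by
    by_contra h
    push_neg at h
    have hcl : ∀ t : Set X, ∃ c, IsClubIn c ∧ (f ⁻¹' {t}) ∩ c = ∅ := by
      intro t
      have ht := h t
      simp only [IsStatIn, not_forall] at ht
      obtain ⟨c, hc1, hc2⟩ := ht
      exact ⟨c, hc1, Set.not_nonempty_iff_eq_empty.1 hc2⟩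
    choose c hc hdisj using hcl
    have hclub := club_iInter_s14 h0 hreg hinit hcard c hc
    obtain ⟨b, hb, _⟩ := hclub.2 (Classical.arbitrary α)
    have hbmem : b ∈ c (f b) := Set.mem_iInter.1 hb (f b)
    have hbad : b ∈ (f ⁻¹' {f b}) ∩ c (f b) := ⟨rfl, hbmem⟩
    rw [hdisj (f b)] at hbad
    exact hbad
  obtain ⟨t, ht⟩ := hex
  have hmain : ∃ y : Set α, IsStatIn y ∧ ∀ x ∈ X, y ⊆ x ∨ y ∩ x = ∅ := by
    refine ⟨f ⁻¹' {t}, ht, ?_⟩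
    intro x hx
    by_cases hm : (⟨x, hx⟩ : X) ∈ t
    · left
      intro a ha
      have hfa : f a = t := ha
      rw [← hfa] at hm
      exact hm
    · right
      ext a
      simp only [Set.mem_inter_iff, Set.mem_empty_iff_false, iff_false, not_and]
      intro ha hax
      have hfa : f a = t := ha
      exact hm (hfa ▸ (hax : (⟨x, hx⟩ : X) ∈ f a))
  refine ⟨hmain, ?_⟩
  rintro ⟨-, hsplit⟩
  obtain ⟨y, hy, hhom⟩ := hmain
  obtain ⟨x, hxX, hs1, hs2⟩ := hsplit y hy
  have hempty : ¬ IsStatIn (∅ : Set α) := by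
    intro h
    obtain ⟨z, hz, -⟩ := h Set.univ (univ_club hreg hinit)
    exact hz
  rcases hhom x hxX with h | h
  · rw [Set.diff_eq_empty.2 h] at hs2
    exact hempty hs2
  · rw [h] at hs1
    exact hempty hs1
end
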